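/- arXiv:math/0411260 — 6 statements merged into one kernel-verified Lean document; each statement's English description precedes it below -/
import Mathlib

section
/- Let M be a matroid of rank r on the ground set [n]. Then the dimension of the matroid polytope P_M (i.e., the dimension of its affine hull) equals n − c(M), where c(M) is the number of connected components of M. -/
open Finset Pointwise

/-- The 0/1 indicator vector (in `ℝ^n`) of a finite set of coordinates. -/
def indVec {n : ℕ} (S : Finset (Fin n)) : Fin n → ℝ := fun i => if i ∈ S then 1 else 0

/-- Independence with respect to a family `𝔅` of bases: being contained in a basis. -/
def FamIndep {n : ℕ} (𝔅 : Finset (Finset (Fin n))) (I : Finset (Fin n)) : Prop :=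
  ∃ B ∈ 𝔅, I ⊆ B

/-- Circuits of the family `𝔅`: minimal dependent sets. -/
def FamCircuit {n : ℕ} (𝔅 : Finset (Finset (Fin n))) (C : Finset (Fin n)) : Prop :=
  ¬ FamIndep 𝔅 C ∧ ∀ D ⊂ C, FamIndep 𝔅 D

open scoped Classical in
/-- The rank of a set: maximal cardinality of an independent subset. -/
noncomputable def famRk {n : ℕ} (𝔅 : Finset (Finset (Fin n))) (F : Finset (Fin n)) : ℕ :=
  (F.powerset.filter (fun I => FamIndep 𝔅 I)).sup Finset.card

open scoped Classical in
/-- The bases of the restriction to `F`: the maximal independent subsets of `F`. -/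
noncomputable def famRestrictBases {n : ℕ} (𝔅 : Finset (Finset (Fin n)))
    (F : Finset (Fin n)) : Finset (Finset (Fin n)) :=
  F.powerset.filter fun B =>
    FamIndep 𝔅 B ∧ ∀ B' ⊆ F, FamIndep 𝔅 B' → B ⊆ B' → B = B'

open scoped Classical in
/-- The bases of the contraction by `F`: the sets `B \ F` where `B` is a basis meeting `F`
in a set of full rank `rk F`. -/
noncomputable def famContractBases {n : ℕ} (𝔅 : Finset (Finset (Fin n)))
    (F : Finset (Fin n)) : Finset (Finset (Fin n)) :=
  (𝔅.filter fun B => (B ∩ F).card = famRk 𝔅 F).image (· \ F)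

/-- `i` and `j` are related if equal or contained in a common circuit. -/
def FamConnRel {n : ℕ} (𝔅 : Finset (Finset (Fin n))) (i j : Fin n) : Prop :=
  i = j ∨ ∃ C, FamCircuit 𝔅 C ∧ i ∈ C ∧ j ∈ C

/-- Number of connected components: number of classes of the equivalence relation
generated by `FamConnRel`. -/
noncomputable def famNumComponents {n : ℕ} (𝔅 : Finset (Finset (Fin n))) : ℕ :=
  Nat.card (Quot (FamConnRel 𝔅))

/-- Connectedness of the matroid presented by bases `𝔅` on the ground set `E`:
any two distinct elements of `E` lie in a common circuit (within `E`). -/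
def FamConnectedOn {n : ℕ} (𝔅 : Finset (Finset (Fin n))) (E : Finset (Fin n)) : Prop :=
  ∀ i ∈ E, ∀ j ∈ E, i ≠ j → ∃ C, C ⊆ E ∧ FamCircuit 𝔅 C ∧ i ∈ C ∧ j ∈ C

/-- A matroid of rank `r` on the ground set `Fin n`, given by its collection of bases:
`r`-element sets satisfying the basis exchange axiom. -/
structure FinMatroid (n r : ℕ) where
  bases : Finset (Finset (Fin n))
  bases_nonempty : bases.Nonempty
  card_bases : ∀ B ∈ bases, B.card = r
  exchange : ∀ B₁ ∈ bases, ∀ B₂ ∈ bases, ∀ i ∈ B₁ \ B₂,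
      ∃ j ∈ B₂ \ B₁, insert j (B₁.erase i) ∈ bases

namespace FinMatroid

variable {n r : ℕ}

def Indep (M : FinMatroid n r) (I : Finset (Fin n)) : Prop := FamIndep M.bases I

def IsCircuit (M : FinMatroid n r) (C : Finset (Fin n)) : Prop := FamCircuit M.bases C

noncomputable def rk (M : FinMatroid n r) (F : Finset (Fin n)) : ℕ := famRk M.bases F

/-- A flat: no circuit leaves exactly one element outside `F`. -/
def IsFlat (M : FinMatroid n r) (F : Finset (Fin n)) : Prop :=
  ∀ C, M.IsCircuit C → (C \ F).card ≠ 1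

open scoped Classical in
/-- Closure of a set: the intersection of all flats containing it (the smallest flat
containing it). -/
noncomputable def closure (M : FinMatroid n r) (S : Finset (Fin n)) : Finset (Fin n) :=
  Finset.univ.filter fun i => ∀ F, M.IsFlat F → S ⊆ F → i ∈ F

/-- No single element is dependent. -/
def Loopless (M : FinMatroid n r) : Prop := ∀ i : Fin n, M.Indep {i}

noncomputable def numComponents (M : FinMatroid n r) : ℕ := famNumComponents M.bases

/-- Any two distinct elements lie in a common circuit. -/
def Connected (M : FinMatroid n r) : Prop :=
  ∀ i j : Fin n, i ≠ j → ∃ C, M.IsCircuit C ∧ i ∈ C ∧ j ∈ C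

/-- `B` is a `w`-maximal basis of `M`. -/
def IsMaxBasis (M : FinMatroid n r) (w : Fin n → ℝ) (B : Finset (Fin n)) : Prop :=
  B ∈ M.bases ∧ ∀ B' ∈ M.bases, ∑ i ∈ B', w i ≤ ∑ i ∈ B, w i

open scoped Classical in
/-- The bases of the matroid `M_w`: the `w`-maximal bases of `M`. -/
noncomputable def maxBases (M : FinMatroid n r) (w : Fin n → ℝ) :
    Finset (Finset (Fin n)) :=
  M.bases.filter fun B => ∀ B' ∈ M.bases, ∑ i ∈ B', w i ≤ ∑ i ∈ B, w i

/-- Membership in the Bergman fan: on every circuit the minimum of `w` is attained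
at least twice. -/
def InBergmanFan (M : FinMatroid n r) (w : Fin n → ℝ) : Prop :=
  ∀ C, M.IsCircuit C → ∃ i ∈ C, ∃ j ∈ C, i ≠ j ∧ w i = w j ∧ ∀ k ∈ C, w i ≤ w k

/-- The matroid polytope: convex hull of the indicator vectors of the bases. -/
noncomputable def polytope (M : FinMatroid n r) : Set (Fin n → ℝ) :=
  convexHull ℝ (indVec '' ↑M.bases)

noncomputable def restrictBases (M : FinMatroid n r) (F : Finset (Fin n)) :
    Finset (Finset (Fin n)) :=
  famRestrictBases M.bases F

noncomputable def contractBases (M : FinMatroid n r) (F : Finset (Fin n)) :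
    Finset (Finset (Fin n)) :=
  famContractBases M.bases F

/-- `𝓖` is a building set in the lattice of flats of `M` (with bottom element `∅` and
join = closure of union): for every nonempty flat `X`, the join map is an order
isomorphism from the product of the lower intervals of the maximal elements of
`𝓖` below `X` onto the lower interval of `X`. -/
def IsFlatBuilding (M : FinMatroid n r) (𝓖 : Set (Finset (Fin n))) : Prop :=
  (∀ F ∈ 𝓖, M.IsFlat F ∧ F ≠ ∅) ∧
  ∀ X, M.IsFlat X → X ≠ ∅ →
    ∃ (k : ℕ) (g : Fin k → Finset (Fin n)),
      Function.Injective g ∧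
      (∀ i, g i ∈ 𝓖 ∧ g i ⊆ X) ∧
      (∀ i, ∀ H ∈ 𝓖, H ⊆ X → g i ⊆ H → g i = H) ∧
      (∀ H ∈ 𝓖, H ⊆ X → ∃ i, H ⊆ g i) ∧
      ∃ e : (∀ i : Fin k, {F : Finset (Fin n) // M.IsFlat F ∧ F ⊆ g i}) ≃o
              {F : Finset (Fin n) // M.IsFlat F ∧ F ⊆ X},
        ∀ y, (e y).1 = M.closure (Finset.univ.sup fun i => (y i).1)

/-- `S` is nested with respect to `𝓖` (in the lattice of flats of `M`): `S ⊆ 𝓖` and for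
every subcollection of at least two pairwise incomparable members, their join (the
closure of their union) is not in `𝓖`. -/
def IsNested (M : FinMatroid n r) (𝓖 : Set (Finset (Fin n)))
    (S : Finset (Finset (Fin n))) : Prop :=
  ↑S ⊆ 𝓖 ∧ ∀ T ⊆ S, 2 ≤ T.card →
    (∀ A ∈ T, ∀ B ∈ T, A ≠ B → ¬ A ⊆ B ∧ ¬ B ⊆ A) →
    M.closure (T.sup id) ∉ 𝓖

end FinMatroid

/-- A building set in the Boolean lattice of subsets of `Fin r`: for every nonempty
`X ⊆ [r]`, the union map is an order isomorphism from the product of the lower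
intervals of the maximal elements of `𝓕` below `X` onto the lower interval of `X`. -/
def BoolBuilding {r : ℕ} (𝓕 : Set (Finset (Fin r))) : Prop :=
  (∀ F ∈ 𝓕, F ≠ ∅) ∧
  ∀ X : Finset (Fin r), X ≠ ∅ →
    ∃ (k : ℕ) (g : Fin k → Finset (Fin r)),
      Function.Injective g ∧
      (∀ i, g i ∈ 𝓕 ∧ g i ⊆ X) ∧
      (∀ i, ∀ H ∈ 𝓕, H ⊆ X → g i ⊆ H → g i = H) ∧
      (∀ H ∈ 𝓕, H ⊆ X → ∃ i, H ⊆ g i) ∧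
      ∃ e : (∀ i : Fin k, {F : Finset (Fin r) // F ⊆ g i}) ≃o
              {F : Finset (Fin r) // F ⊆ X},
        ∀ y, (e y).1 = Finset.univ.sup fun i => (y i).1

/-- `S` is nested with respect to `𝓕` in the Boolean lattice: for every subcollection
of at least two pairwise incomparable members, their union is not in `𝓕`. -/
def BoolNested {r : ℕ} (𝓕 : Set (Finset (Fin r))) (S : Finset (Finset (Fin r))) : Prop :=
  ↑S ⊆ 𝓕 ∧ ∀ T ⊆ S, 2 ≤ T.card →
    (∀ A ∈ T, ∀ B ∈ T, A ≠ B → ¬ A ⊆ B ∧ ¬ B ⊆ A) →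
    T.sup id ∉ 𝓕

/-- The simplex `Δ_F = conv{e_i : i ∈ F}`. -/
noncomputable def faceSimplex {r : ℕ} (F : Finset (Fin r)) : Set (Fin r → ℝ) :=
  convexHull ℝ ((fun i => (Pi.single i 1 : Fin r → ℝ)) '' ↑F)

/-- The Minkowski sum `Δ_𝓕 = Σ_{F ∈ 𝓕} Δ_F`. -/
noncomputable def minkSum {r : ℕ} (𝓕 : Finset (Finset (Fin r))) : Set (Fin r → ℝ) :=
  ∑ F ∈ 𝓕, faceSimplex F
section StatementOneAux

namespace FinMatroid
variable {n r : ℕ}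

lemma indep_card_le (M : FinMatroid n r) {I : Finset (Fin n)} (hI : FamIndep M.bases I) :
    I.card ≤ r := by
  obtain ⟨B, hB, hIB⟩ := hI
  exact (Finset.card_le_card hIB).trans (M.card_bases B hB).le

lemma mem_bases_of_indep (M : FinMatroid n r) {I : Finset (Fin n)}
    (hI : FamIndep M.bases I) (h : I.card = r) : I ∈ M.bases := by
  obtain ⟨B, hB, hIB⟩ := hI
  have hc := M.card_bases B hB
  have : I = B := Finset.eq_of_subset_of_card_le hIB (by omega)
  exact this ▸ hB

lemma indep_subset {𝔅 : Finset (Finset (Fin n))} {I J : Finset (Fin n)}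
    (hJ : FamIndep 𝔅 J) (h : I ⊆ J) : FamIndep 𝔅 I := by
  obtain ⟨B, hB, hJB⟩ := hJ; exact ⟨B, hB, h.trans hJB⟩

lemma dep_has_circuit {𝔅 : Finset (Finset (Fin n))} :
    ∀ D : Finset (Fin n), ¬ FamIndep 𝔅 D → ∃ C ⊆ D, FamCircuit 𝔅 C := by
  intro D
  induction D using Finset.strongInduction with
  | _ D ih =>
    intro hD
    by_cases h : ∀ E ⊂ D, FamIndep 𝔅 E
    · exact ⟨D, subset_rfl, hD, h⟩
    · push_neg at h
      obtain ⟨E, hE, hEdep⟩ := h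
      obtain ⟨C, hCE, hC⟩ := ih E hE hEdep
      exact ⟨C, hCE.trans hE.subset, hC⟩

lemma insert_dep (M : FinMatroid n r) {B : Finset (Fin n)} (hB : B ∈ M.bases)
    {i : Fin n} (hi : i ∉ B) : ¬ FamIndep M.bases (insert i B) := by
  intro h
  have := M.indep_card_le h
  rw [Finset.card_insert_of_notMem hi, M.card_bases B hB] at this
  omega

lemma augment (M : FinMatroid n r) {I J : Finset (Fin n)}
    (hI : FamIndep M.bases I) (hJ : FamIndep M.bases J) (hcard : I.card < J.card) :
    ∃ x ∈ J, x ∉ I ∧ FamIndep M.bases (insert x I) := by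
  classical
  by_contra hcon
  push_neg at hcon
  set P := (M.bases ×ˢ M.bases).filter (fun p => I ⊆ p.1 ∧ J ⊆ p.2) with hP
  obtain ⟨BI, hBI, hIBI⟩ := hI
  obtain ⟨BJ, hBJ, hJBJ⟩ := hJ
  have hPne : P.Nonempty := ⟨(BI, BJ), by
    simp only [hP, Finset.mem_filter, Finset.mem_product]; exact ⟨⟨hBI, hBJ⟩, hIBI, hJBJ⟩⟩
  obtain ⟨⟨B1, B2⟩, hmem, hmin⟩ := P.exists_min_image
    (fun p => (p.2 \ (J ∪ p.1)).card + (p.1 \ (I ∪ p.2)).card) hPne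
  simp only [hP, Finset.mem_filter, Finset.mem_product] at hmem
  obtain ⟨⟨hB1, hB2⟩, hIB1, hJB2⟩ := hmem
  have h1 : B2 \ (J ∪ B1) = ∅ := by
    by_contra hne
    obtain ⟨x, hx⟩ := Finset.nonempty_of_ne_empty hne
    rw [Finset.mem_sdiff, Finset.mem_union] at hx
    push_neg at hx
    have hxB2 := hx.1
    have hxJ := hx.2.1
    have hxB1 := hx.2.2
    obtain ⟨y, hy, hB2'⟩ := M.exchange B2 hB2 B1 hB1 x (Finset.mem_sdiff.2 ⟨hxB2, hxB1⟩)
    rw [Finset.mem_sdiff] at hy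
    set B2' := insert y (B2.erase x) with hB2'def
    have hJB2' : J ⊆ B2' := by
      intro a ha
      exact Finset.mem_insert_of_mem (Finset.mem_erase.2 ⟨fun h => hxJ (h ▸ ha), hJB2 ha⟩)
    have hmem' : (B1, B2') ∈ P := by
      simp only [hP, Finset.mem_filter, Finset.mem_product]; exact ⟨⟨hB1, hB2'⟩, hIB1, hJB2'⟩
    have hs1 : B2' \ (J ∪ B1) ⊆ (B2 \ (J ∪ B1)).erase x := by
      intro a ha
      rw [Finset.mem_sdiff] at ha
      rcases Finset.mem_insert.1 ha.1 with rfl | haB2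
      · exact absurd (Finset.mem_union_right _ hy.1) ha.2
      · exact Finset.mem_erase.2 ⟨(Finset.mem_erase.1 haB2).1,
          Finset.mem_sdiff.2 ⟨(Finset.mem_erase.1 haB2).2, ha.2⟩⟩
    have hc1 : (B2' \ (J ∪ B1)).card < (B2 \ (J ∪ B1)).card := by
      calc (B2' \ (J ∪ B1)).card ≤ ((B2 \ (J ∪ B1)).erase x).card := Finset.card_le_card hs1
        _ < (B2 \ (J ∪ B1)).card := Finset.card_erase_lt_of_mem
          (Finset.mem_sdiff.2 ⟨hxB2, by rw [Finset.mem_union]; tauto⟩)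
    have hs2 : B1 \ (I ∪ B2') ⊆ B1 \ (I ∪ B2) := by
      intro a ha
      rw [Finset.mem_sdiff, Finset.mem_union] at ha ⊢
      push_neg at ha ⊢
      refine ⟨ha.1, ha.2.1, fun haB2 => ?_⟩
      have : a ∉ B2' := ha.2.2
      rw [hB2'def, Finset.mem_insert, Finset.mem_erase] at this
      push_neg at this
      have := this.2 
      by_cases hax : a = x
      · exact hxB1 (hax ▸ ha.1)
      · exact absurd haB2 (fun h => by simp [hax, h] at this)
    have := hmin _ hmem'
    have hc2 := Finset.card_le_card hs2
    simp only at this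
    omega
  have h2 : B1 \ (I ∪ B2) = ∅ := by
    by_contra hne
    obtain ⟨x, hx⟩ := Finset.nonempty_of_ne_empty hne
    rw [Finset.mem_sdiff, Finset.mem_union] at hx
    push_neg at hx
    have hxB1 := hx.1
    have hxI := hx.2.1
    have hxB2 := hx.2.2
    obtain ⟨y, hy, hB1'⟩ := M.exchange B1 hB1 B2 hB2 x (Finset.mem_sdiff.2 ⟨hxB1, hxB2⟩)
    rw [Finset.mem_sdiff] at hy
    set B1' := insert y (B1.erase x) with hB1'def
    have hIB1' : I ⊆ B1' := by
      intro a ha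
      exact Finset.mem_insert_of_mem (Finset.mem_erase.2 ⟨fun h => hxI (h ▸ ha), hIB1 ha⟩)
    have hmem' : (B1', B2) ∈ P := by
      simp only [hP, Finset.mem_filter, Finset.mem_product]; exact ⟨⟨hB1', hB2⟩, hIB1', hJB2⟩
    have hs1 : B1' \ (I ∪ B2) ⊆ (B1 \ (I ∪ B2)).erase x := by
      intro a ha
      rw [Finset.mem_sdiff] at ha
      rcases Finset.mem_insert.1 ha.1 with rfl | haB1
      · exact absurd (Finset.mem_union_right _ hy.1) ha.2
      · exact Finset.mem_erase.2 ⟨(Finset.mem_erase.1 haB1).1,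
          Finset.mem_sdiff.2 ⟨(Finset.mem_erase.1 haB1).2, ha.2⟩⟩
    have hc1 : (B1' \ (I ∪ B2)).card < (B1 \ (I ∪ B2)).card := by
      calc (B1' \ (I ∪ B2)).card ≤ ((B1 \ (I ∪ B2)).erase x).card := Finset.card_le_card hs1
        _ < (B1 \ (I ∪ B2)).card := Finset.card_erase_lt_of_mem
          (Finset.mem_sdiff.2 ⟨hxB1, by rw [Finset.mem_union]; tauto⟩)
    have hs2 : B2 \ (J ∪ B1') ⊆ B2 \ (J ∪ B1) := by
      intro a ha
      rw [Finset.mem_sdiff, Finset.mem_union] at ha ⊢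
      push_neg at ha ⊢
      refine ⟨ha.1, ha.2.1, fun haB1 => ?_⟩
      have : a ∉ B1' := ha.2.2
      rw [hB1'def, Finset.mem_insert, Finset.mem_erase] at this
      push_neg at this
      by_cases hax : a = x
      · exact hxB2 (hax ▸ ha.1)
      · exact absurd haB1 (fun h => by simp [hax, h] at this)
    have := hmin _ hmem'
    have hc2 := Finset.card_le_card hs2
    simp only at this
    omega
  -- conclude
  have hJB1 : ∀ x ∈ J, x ∉ I → x ∉ B1 := by
    intro x hxJ hxI hxB1
    exact hcon x hxJ hxI ⟨B1, hB1, Finset.insert_subset hxB1 hIB1⟩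
  have e1 : J \ I ⊆ B2 \ B1 := by
    intro a ha
    rw [Finset.mem_sdiff] at ha ⊢
    exact ⟨hJB2 ha.1, hJB1 a ha.1 ha.2⟩
  have e2 : B1 \ B2 ⊆ I \ J := by
    intro a ha
    rw [Finset.mem_sdiff] at ha ⊢
    have : a ∈ I ∪ B2 := by
      by_contra h
      exact (Finset.eq_empty_iff_forall_notMem.1 h2 a) (Finset.mem_sdiff.2 ⟨ha.1, h⟩)
    rw [Finset.mem_union] at this
    have haI : a ∈ I := this.resolve_right ha.2
    exact ⟨haI, fun haJ => ha.2 (hJB2 haJ)⟩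
  have hcc : (B1 \ B2).card = (B2 \ B1).card :=
    Finset.card_sdiff_comm (by rw [M.card_bases B1 hB1, M.card_bases B2 hB2])
  have k1 := Finset.card_le_card e1
  have k2 := Finset.card_le_card e2
  have k3 := Finset.card_inter_add_card_sdiff I J
  have k4 := Finset.card_inter_add_card_sdiff J I
  rw [Finset.inter_comm] at k4
  omega

lemma exists_max_indep (M : FinMatroid n r) (S I0 : Finset (Fin n))
    (h0 : FamIndep M.bases I0) (h0S : I0 ⊆ S) :
    ∃ I, I0 ⊆ I ∧ I ⊆ S ∧ FamIndep M.bases I ∧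
      ∀ J ⊆ S, FamIndep M.bases J → J.card ≤ I.card := by
  classical
  set T := S.powerset.filter (fun I => I0 ⊆ I ∧ FamIndep M.bases I) with hT
  have hTne : T.Nonempty := ⟨I0, by
    simp only [hT, Finset.mem_filter, Finset.mem_powerset]; exact ⟨h0S, subset_rfl, h0⟩⟩
  obtain ⟨I, hIT, hmax⟩ := T.exists_max_image Finset.card hTne
  simp only [hT, Finset.mem_filter, Finset.mem_powerset] at hIT
  refine ⟨I, hIT.2.1, hIT.1, hIT.2.2, ?_⟩
  intro J hJS hJ
  by_contra h
  push_neg at h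
  obtain ⟨x, hxJ, hxI, hind⟩ := M.augment hIT.2.2 hJ h
  have hmem : insert x I ∈ T := by
    simp only [hT, Finset.mem_filter, Finset.mem_powerset]
    exact ⟨Finset.insert_subset (hJS hxJ) hIT.1,
      hIT.2.1.trans (Finset.subset_insert _ _), hind⟩
  have := hmax _ hmem
  rw [Finset.card_insert_of_notMem hxI] at this
  omega

lemma circuit_mem_insert (M : FinMatroid n r) {B C : Finset (Fin n)} {i : Fin n}
    (hB : B ∈ M.bases) (hC : FamCircuit M.bases C) (hsub : C ⊆ insert i B) : i ∈ C := by
  by_contra h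
  exact hC.1 ⟨B, hB, fun a ha => (Finset.mem_insert.1 (hsub ha)).resolve_left
    (by rintro rfl; exact h ha)⟩

lemma fund_unique (M : FinMatroid n r) {B C1 C2 : Finset (Fin n)} {i : Fin n}
    (hB : B ∈ M.bases) (hi : i ∉ B)
    (hC1 : FamCircuit M.bases C1) (h1 : C1 ⊆ insert i B)
    (hC2 : FamCircuit M.bases C2) (h2 : C2 ⊆ insert i B) : C1 = C2 := by
  classical
  have mem1 : i ∈ C1 := M.circuit_mem_insert hB hC1 h1
  have mem2 : i ∈ C2 := M.circuit_mem_insert hB hC2 h2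
  by_contra hne
  have hns : ¬ C2 ⊆ C1 := fun hsub =>
    hC2.1 (hC1.2 C2 (Finset.ssubset_iff_subset_ne.2 ⟨hsub, fun h => hne h.symm⟩))
  obtain ⟨f, hfC2, hfC1⟩ := Finset.not_subset.1 hns
  set S := C1 ∪ C2 with hS
  have hIS : C2.erase f ⊆ S := (Finset.erase_subset _ _).trans Finset.subset_union_right
  have hind0 : FamIndep M.bases (C2.erase f) := hC2.2 _ (Finset.erase_ssubset hfC2)
  obtain ⟨I, hI0, hIS', hIind, hImax⟩ := M.exists_max_indep S (C2.erase f) hind0 hIS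
  have hfI : f ∉ I := by
    intro h
    refine hC2.1 (indep_subset hIind ?_)
    intro a ha
    by_cases haf : a = f
    · exact haf ▸ h
    · exact hI0 (Finset.mem_erase.2 ⟨haf, ha⟩)
  have hiS : i ∈ S := Finset.mem_union_left _ mem1
  have hSB : S ⊆ insert i B := Finset.union_subset h1 h2
  have hSi : S.erase i ⊆ B := by
    intro a ha
    rw [Finset.mem_erase] at ha
    exact (Finset.mem_insert.1 (hSB ha.2)).resolve_left ha.1
  have hcard : S.card - 1 ≤ I.card := by
    have := hImax (S.erase i) (Finset.erase_subset _ _) ⟨B, hB, hSi⟩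
    rwa [Finset.card_erase_of_mem hiS] at this
  have hfS : f ∈ S := Finset.mem_union_right _ hfC2
  have hIsub : I ⊆ S.erase f := fun a ha =>
    Finset.mem_erase.2 ⟨fun h => hfI (h ▸ ha), hIS' ha⟩
  have hIeq : I = S.erase f := by
    refine Finset.eq_of_subset_of_card_le hIsub ?_
    rw [Finset.card_erase_of_mem hfS]
    exact hcard
  have hC1I : C1 ⊆ I := by
    rw [hIeq]
    intro a ha
    exact Finset.mem_erase.2 ⟨fun h => hfC1 (h ▸ ha), Finset.mem_union_left _ ha⟩
  exact hC1.1 (indep_subset hIind hC1I)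

/-- Key lemma A: for a circuit `C` and distinct `i j ∈ C`, there are bases `B ∋ j` and
`insert i (B.erase j)`. -/
lemma circuit_exchange (M : FinMatroid n r) {C : Finset (Fin n)} {i j : Fin n}
    (hC : FamCircuit M.bases C) (hi : i ∈ C) (hj : j ∈ C) (hij : i ≠ j) :
    ∃ B ∈ M.bases, j ∈ B ∧ i ∉ B ∧ insert i (B.erase j) ∈ M.bases := by
  classical
  obtain ⟨B, hB, hsub⟩ := hC.2 _ (Finset.erase_ssubset hi)
  have hiB : i ∉ B := by
    intro h
    refine hC.1 ⟨B, hB, fun a ha => ?_⟩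
    by_cases hai : a = i
    · exact hai ▸ h
    · exact hsub (Finset.mem_erase.2 ⟨hai, ha⟩)
  have hjB : j ∈ B := hsub (Finset.mem_erase.2 ⟨fun h => hij h.symm, hj⟩)
  have hCins : C ⊆ insert i B := by
    intro a ha
    by_cases hai : a = i
    · exact hai ▸ Finset.mem_insert_self _ _
    · exact Finset.mem_insert_of_mem (hsub (Finset.mem_erase.2 ⟨hai, ha⟩))
  have hDind : FamIndep M.bases (insert i (B.erase j)) := by
    by_contra h
    obtain ⟨C', hC'sub, hC'⟩ := dep_has_circuit _ h
    have hC'B : C' ⊆ insert i B :=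
      hC'sub.trans (Finset.insert_subset_insert _ (Finset.erase_subset _ _))
    have heq : C' = C := M.fund_unique hB hiB hC' hC'B hC hCins
    have : j ∈ C' := heq ▸ hj
    have := hC'sub this
    rw [Finset.mem_insert, Finset.mem_erase] at this
    rcases this with h' | h'
    · exact hij h'.symm
    · exact h'.1 rfl
  have hr : 1 ≤ r := by
    have := M.card_bases B hB
    have : B.Nonempty := ⟨j, hjB⟩
    have := Finset.card_pos.2 this
    omega
  have hDcard : (insert i (B.erase j)).card = r := by
    rw [Finset.card_insert_of_notMem (fun h => hiB (Finset.erase_subset _ _ h)),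
      Finset.card_erase_of_mem hjB, M.card_bases B hB]
    omega
  exact ⟨B, hB, hjB, hiB, M.mem_bases_of_indep hDind hDcard⟩


/-- If an exchange step between two bases swaps `i` out for `j`, then `i` and `j` lie in a
common circuit. -/
lemma conn_of_exchange (M : FinMatroid n r) {B : Finset (Fin n)} {i j : Fin n}
    (hB : B ∈ M.bases) (hjB : j ∉ B) (hiB : i ∈ B)
    (hB' : insert j (B.erase i) ∈ M.bases) : FamConnRel M.bases i j := by
  classical
  obtain ⟨C, hCsub, hC⟩ := dep_has_circuit (insert j B) (M.insert_dep hB hjB)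
  have hjC : j ∈ C := M.circuit_mem_insert hB hC hCsub
  have hiC : i ∈ C := by
    by_contra h
    refine hC.1 ⟨insert j (B.erase i), hB', fun a ha => ?_⟩
    rcases Finset.mem_insert.1 (hCsub ha) with rfl | haB
    · exact Finset.mem_insert_self _ _
    · exact Finset.mem_insert_of_mem (Finset.mem_erase.2 ⟨fun h' => h (h' ▸ ha), haB⟩)
  exact Or.inr ⟨C, hC, hiC, hjC⟩

noncomputable instance famQuotFintype {n : ℕ} (𝔅 : Finset (Finset (Fin n))) :
    Fintype (Quot (FamConnRel 𝔅)) := by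
  classical
  exact Fintype.ofSurjective (Quot.mk _) Quot.mk_surjective

open scoped Classical in
/-- The linear map summing coordinates over connected components. -/
noncomputable def connSum {n : ℕ} (𝔅 : Finset (Finset (Fin n))) :
    (Fin n → ℝ) →ₗ[ℝ] (Quot (FamConnRel 𝔅) → ℝ) where
  toFun x := fun q => ∑ i ∈ Finset.univ.filter (fun i => Quot.mk (FamConnRel 𝔅) i = q), x i
  map_add' x y := by funext q; exact Finset.sum_add_distrib
  map_smul' c x := by funext q; simp [Finset.mul_sum]

open scoped Classical in
lemma connSum_single {𝔅 : Finset (Finset (Fin n))} (i : Fin n) :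
    connSum 𝔅 (Pi.single i 1) = Pi.single (Quot.mk (FamConnRel 𝔅) i) 1 := by
  funext q
  show (∑ j ∈ Finset.univ.filter (fun j => Quot.mk (FamConnRel 𝔅) j = q),
      (Pi.single i (1:ℝ) : Fin n → ℝ) j) = _
  rw [Finset.sum_congr rfl (fun j _ => Pi.single_apply i (1:ℝ) j)]
  rw [Finset.sum_ite_eq' (Finset.univ.filter (fun j => Quot.mk (FamConnRel 𝔅) j = q)) i
    (fun _ => (1:ℝ))]
  rw [Pi.single_apply]
  simp only [Finset.mem_filter, Finset.mem_univ, true_and]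
  split_ifs with h1 h2 h2
  · rfl
  · exact absurd h1.symm h2
  · exact absurd h2.symm h1
  · rfl

lemma connSum_surj (𝔅 : Finset (Finset (Fin n))) : Function.Surjective (connSum 𝔅) := by
  classical
  intro y
  refine ⟨∑ q : Quot (FamConnRel 𝔅), y q • (Pi.single (Quot.out q) 1 : Fin n → ℝ), ?_⟩
  rw [map_sum]
  have hq : ∀ q : Quot (FamConnRel 𝔅),
      connSum 𝔅 (y q • (Pi.single (Quot.out q) 1 : Fin n → ℝ)) = Pi.single q (y q) := by
    intro q
    rw [map_smul, connSum_single, Quot.out_eq]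
    funext p
    by_cases hpq : p = q <;> simp [Pi.single_apply, hpq]
  rw [Finset.sum_congr rfl (fun q _ => hq q), Finset.univ_sum_single]

open scoped Classical in
lemma ker_decomp {𝔅 : Finset (Finset (Fin n))} {x : Fin n → ℝ}
    (h : connSum 𝔅 x = 0) :
    x = ∑ i : Fin n, x i •
      ((Pi.single i 1 : Fin n → ℝ) - Pi.single (Quot.out (Quot.mk (FamConnRel 𝔅) i)) 1) := by
  have e1 : ∑ i : Fin n, x i • (Pi.single i 1 : Fin n → ℝ) = x := by
    rw [Finset.sum_congr rfl (fun i _ => by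
      show x i • (Pi.single i 1 : Fin n → ℝ) = Pi.single i (x i)
      funext j
      by_cases hji : j = i <;> simp [Pi.single_apply, hji])]
    exact Finset.univ_sum_single x
  have e2 : ∑ i : Fin n, x i •
      (Pi.single (Quot.out (Quot.mk (FamConnRel 𝔅) i)) 1 : Fin n → ℝ) = 0 := by
    rw [← Finset.sum_fiberwise Finset.univ (fun i => Quot.mk (FamConnRel 𝔅) i)
      (fun i => x i • (Pi.single (Quot.out (Quot.mk (FamConnRel 𝔅) i)) 1 : Fin n → ℝ))]
    refine Finset.sum_eq_zero (fun q _ => ?_)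
    have hcongr : ∀ i ∈ Finset.univ.filter (fun i => Quot.mk (FamConnRel 𝔅) i = q),
        x i • (Pi.single (Quot.out (Quot.mk (FamConnRel 𝔅) i)) 1 : Fin n → ℝ)
          = x i • (Pi.single (Quot.out q) 1 : Fin n → ℝ) := by
      intro i hi
      rw [(Finset.mem_filter.1 hi).2]
    rw [Finset.sum_congr rfl hcongr, ← Finset.sum_smul]
    have hz : (∑ i ∈ Finset.univ.filter (fun i => Quot.mk (FamConnRel 𝔅) i = q), x i) = 0 :=
      congrFun h q
    rw [hz, zero_smul]
  calc x = ∑ i : Fin n, x i • (Pi.single i 1 : Fin n → ℝ) - ∑ i : Fin n, x i •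
      (Pi.single (Quot.out (Quot.mk (FamConnRel 𝔅) i)) 1 : Fin n → ℝ) := by
        rw [e1, e2, sub_zero]
    _ = _ := by rw [← Finset.sum_sub_distrib]
                exact Finset.sum_congr rfl (fun i _ => (smul_sub ..).symm)

lemma indVec_exchange_sub {B : Finset (Fin n)} {i j : Fin n}
    (hiB : i ∈ B) (hjB : j ∉ B) :
    indVec B = indVec (insert j (B.erase i)) + ((Pi.single i 1 : Fin n → ℝ) - Pi.single j 1) := by
  have hij : i ≠ j := fun h => hjB (h ▸ hiB)
  funext k
  simp only [indVec, Pi.add_apply, Pi.sub_apply, Pi.single_apply, Finset.mem_insert,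
    Finset.mem_erase]
  by_cases hki : k = i <;> by_cases hkj : k = j <;> simp_all

lemma connSum_indVec_const (M : FinMatroid n r) :
    ∀ B1 ∈ M.bases, ∀ B2 ∈ M.bases,
      connSum M.bases (indVec B1) = connSum M.bases (indVec B2) := by
  classical
  suffices h : ∀ c : ℕ, ∀ B1 ∈ M.bases, ∀ B2 ∈ M.bases, (B1 \ B2).card = c →
      connSum M.bases (indVec B1) = connSum M.bases (indVec B2) by
    intro B1 hB1 B2 hB2
    exact h _ B1 hB1 B2 hB2 rfl
  intro c
  induction c using Nat.strong_induction_on with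
  | _ c ih =>
    intro B1 hB1 B2 hB2 hc
    rcases Nat.eq_zero_or_pos c with rfl | hpos
    · have : B1 ⊆ B2 := by
        rw [← Finset.sdiff_eq_empty_iff_subset]
        exact Finset.card_eq_zero.1 hc
      have : B1 = B2 := Finset.eq_of_subset_of_card_le this
        (by rw [M.card_bases B1 hB1, M.card_bases B2 hB2])
      rw [this]
    · have hne : (B1 \ B2).Nonempty := Finset.card_pos.1 (hc ▸ hpos)
      obtain ⟨i, hi⟩ := hne
      obtain ⟨j, hj, hB1'⟩ := M.exchange B1 hB1 B2 hB2 i hi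
      rw [Finset.mem_sdiff] at hi hj
      have hconn : FamConnRel M.bases i j := M.conn_of_exchange hB1 hj.2 hi.1 hB1'
      have hq : Quot.mk (FamConnRel M.bases) i = Quot.mk (FamConnRel M.bases) j :=
        Quot.sound hconn
      have hstep : connSum M.bases (indVec B1) = connSum M.bases (indVec (insert j (B1.erase i))) := by
        rw [indVec_exchange_sub hi.1 hj.2, map_add, map_sub, connSum_single, connSum_single,
          hq, sub_self, add_zero]
      rw [hstep]
      refine ih ((insert j (B1.erase i)) \ B2).card ?_ _ hB1' _ hB2 rfl
      have hset : (insert j (B1.erase i)) \ B2 = (B1 \ B2).erase i := by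
        ext a
        simp only [Finset.mem_sdiff, Finset.mem_insert, Finset.mem_erase]
        constructor
        · rintro ⟨rfl | ⟨hai, haB1⟩, haB2⟩
          · exact absurd hj.1 haB2
          · exact ⟨hai, haB1, haB2⟩
        · rintro ⟨hai, haB1, haB2⟩
          exact ⟨Or.inr ⟨hai, haB1⟩, haB2⟩
      rw [hset, Finset.card_erase_of_mem (Finset.mem_sdiff.2 hi), hc]
      omega

lemma diff_mem_vectorSpan (M : FinMatroid n r) {i j : Fin n}
    (h : Quot.mk (FamConnRel M.bases) i = Quot.mk (FamConnRel M.bases) j) :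
    (Pi.single i 1 : Fin n → ℝ) - Pi.single j 1 ∈ vectorSpan ℝ (indVec '' ↑M.bases) := by
  rw [Quot.eq] at h
  induction h with
  | rel a b hab =>
    rcases hab with rfl | ⟨C, hC, haC, hbC⟩
    · simp only [sub_self]; exact Submodule.zero_mem _
    · by_cases hab : a = b
      · subst hab; simp only [sub_self]; exact Submodule.zero_mem _
      · obtain ⟨B, hB, hbB, haB, hD⟩ := M.circuit_exchange hC hbC haC (fun h => hab h.symm)
        -- B ∋ a? careful: circuit_exchange with (i := b, j := a): gives a ∈ B, b ∉ B
        have hsub := indVec_exchange_sub hbB haB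
        -- indVec B = indVec (insert b (B.erase a))?? check orientation below
        have h1 : indVec B ∈ indVec '' ↑M.bases := ⟨B, by simpa using hB, rfl⟩
        have h2 : indVec (insert b (B.erase a)) ∈ indVec '' ↑M.bases := ⟨_, by simpa using hD, rfl⟩
        have := vsub_mem_vectorSpan ℝ h1 h2
        rw [vsub_eq_sub, hsub] at this
        simpa using this
  | refl a => simp only [sub_self]; exact Submodule.zero_mem _
  | symm a b _ ihab =>
    have := Submodule.neg_mem _ ihab
    rwa [neg_sub] at this
  | trans a b c _ _ ih1 ih2 =>
    have := Submodule.add_mem _ ih1 ih2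
    rwa [sub_add_sub_cancel] at this

theorem statement1_aux (M : FinMatroid n r) :
    Module.finrank ℝ (affineSpan ℝ M.polytope).direction = n - M.numComponents := by
  classical
  have hpoly : M.polytope = convexHull ℝ (indVec '' ↑M.bases) := rfl
  rw [hpoly, affineSpan_convexHull, direction_affineSpan]
  have hker : vectorSpan ℝ (indVec '' ↑M.bases) = LinearMap.ker (connSum M.bases) := by
    apply le_antisymm
    · rw [vectorSpan_def, Submodule.span_le]
      rintro v hv
      rw [Set.mem_vsub] at hv
      obtain ⟨x1, hx1, x2, hx2, rfl⟩ := hv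
      obtain ⟨B1, hB1, rfl⟩ := hx1
      obtain ⟨B2, hB2, rfl⟩ := hx2
      rw [SetLike.mem_coe, LinearMap.mem_ker, vsub_eq_sub, map_sub,
        M.connSum_indVec_const B1 (by simpa using hB1) B2 (by simpa using hB2), sub_self]
    · intro x hx
      rw [LinearMap.mem_ker] at hx
      rw [ker_decomp hx]
      refine Submodule.sum_mem _ (fun i _ => Submodule.smul_mem _ _ ?_)
      exact M.diff_mem_vectorSpan (by rw [Quot.out_eq])
  rw [hker]
  have hrank := LinearMap.finrank_range_add_finrank_ker (connSum M.bases)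
  rw [LinearMap.range_eq_top.2 (connSum_surj M.bases), finrank_top,
    Module.finrank_pi ℝ, Module.finrank_pi ℝ, Fintype.card_fin] at hrank
  have hnum : M.numComponents = Fintype.card (Quot (FamConnRel M.bases)) :=
    Nat.card_eq_fintype_card
  omega

end FinMatroid

end StatementOneAux


/-- The dimension of (the affine hull of) the matroid polytope `P_M`
equals `n - c(M)`, where `c(M)` is the number of connected components of `M`. -/
theorem statement1 {n r : ℕ} (M : FinMatroid n r) :
    Module.finrank ℝ (affineSpan ℝ M.polytope).direction = n - M.numComponents := by
  exact FinMatroid.statement1_aux M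
end

section
/- Let M be a matroid on the ground set [n] and let w ∈ ℝ^n. Then w lies in the Bergman fan B̃(M) if and only if every element i ∈ [n] lies in some w-maximal basis of M (equivalently, the matroid M_w has no loops). -/
open Finset Pointwise

namespace BergmanAux

open Finset

variable {n r : ℕ}

lemma famIndep_subset {𝔅 : Finset (Finset (Fin n))} {I J : Finset (Fin n)}
    (h : FamIndep 𝔅 J) (hIJ : I ⊆ J) : FamIndep 𝔅 I := by
  obtain ⟨B, hB, hJB⟩ := h; exact ⟨B, hB, hIJ.trans hJB⟩

lemma exists_circuit_of_dep {𝔅 : Finset (Finset (Fin n))} :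
    ∀ S : Finset (Fin n), ¬ FamIndep 𝔅 S → ∃ C ⊆ S, FamCircuit 𝔅 C := by
  intro S
  induction S using Finset.strongInductionOn with
  | _ S ih =>
    intro hS
    by_cases h : ∀ D ⊂ S, FamIndep 𝔅 D
    · exact ⟨S, Finset.Subset.refl S, hS, h⟩
    · push_neg at h
      obtain ⟨D, hDS, hD⟩ := h
      obtain ⟨C, hCD, hC⟩ := ih D hDS hD
      exact ⟨C, hCD.trans hDS.subset, hC⟩

/-- Key exchange lemma: from a basis `B` and a circuit `C` meeting it at `i`,
we can exchange `i` for some `j ∈ C \ B`. -/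
lemma exch_basis (M : FinMatroid n r) {B C : Finset (Fin n)} {i : Fin n}
    (hB : B ∈ M.bases) (hC : M.IsCircuit C) (hiB : i ∈ B) (hiC : i ∈ C) :
    ∃ j ∈ C, j ∉ B ∧ insert j (B.erase i) ∈ M.bases := by
  classical
  have hCind : FamIndep M.bases (C.erase i) := hC.2 _ (Finset.erase_ssubset hiC)
  set 𝒮 := M.bases.filter (fun B' => C.erase i ⊆ B') with h𝒮
  have h𝒮ne : 𝒮.Nonempty := by
    obtain ⟨B', hB', hsub⟩ := hCind
    exact ⟨B', Finset.mem_filter.2 ⟨hB', hsub⟩⟩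
  obtain ⟨B₁, hB₁mem, hB₁max⟩ := 𝒮.exists_max_image (fun B' => (B' ∩ B).card) h𝒮ne
  rw [Finset.mem_filter] at hB₁mem
  obtain ⟨hB₁, hCB₁⟩ := hB₁mem
  have hiB₁ : i ∉ B₁ := by
    intro hi
    refine hC.1 ⟨B₁, hB₁, fun x hx => ?_⟩
    by_cases hxi : x = i
    · subst hxi; exact hi
    · exact hCB₁ (Finset.mem_erase.2 ⟨hxi, hx⟩)
  have hsub : B₁ \ B ⊆ C.erase i := by
    intro x hx
    by_contra hxC
    rw [Finset.mem_sdiff] at hx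
    obtain ⟨y, hy, hbas⟩ := M.exchange B₁ hB₁ B hB x (Finset.mem_sdiff.2 hx)
    rw [Finset.mem_sdiff] at hy
    have hmem2 : insert y (B₁.erase x) ∈ 𝒮 := by
      refine Finset.mem_filter.2 ⟨hbas, fun z hz => ?_⟩
      refine Finset.mem_insert.2 (Or.inr (Finset.mem_erase.2 ⟨?_, hCB₁ hz⟩))
      rintro rfl; exact hxC hz
    have h1 : (insert y (B₁.erase x)) ∩ B = insert y (B₁ ∩ B) := by
      rw [Finset.insert_inter_of_mem hy.1, Finset.erase_inter,
        Finset.erase_eq_of_notMem (fun hmem => hx.2 (Finset.mem_inter.1 hmem).2)]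
    have hcard : (B₁ ∩ B).card < ((insert y (B₁.erase x)) ∩ B).card := by
      rw [h1, Finset.card_insert_of_notMem (fun hmem => hy.2 (Finset.mem_inter.1 hmem).1)]
      omega
    exact absurd (hB₁max _ hmem2) (not_le.2 hcard)
  obtain ⟨j, hj, hjbas⟩ := M.exchange B hB B₁ hB₁ i (Finset.mem_sdiff.2 ⟨hiB, hiB₁⟩)
  rw [Finset.mem_sdiff] at hj
  have hjC : j ∈ C.erase i := hsub (Finset.mem_sdiff.2 ⟨hj.1, hj.2⟩)
  exact ⟨j, Finset.mem_of_mem_erase hjC, hj.2, hjbas⟩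

lemma sum_exch {B : Finset (Fin n)} {i j : Fin n} (w : Fin n → ℝ)
    (hi : i ∈ B) (hj : j ∉ B) :
    ∑ k ∈ insert j (B.erase i), w k = ∑ k ∈ B, w k - w i + w j := by
  rw [Finset.sum_insert (fun h => hj (Finset.mem_of_mem_erase h)),
    Finset.sum_erase_eq_sub hi]
  ring

end BergmanAux

theorem statement2' {n r : ℕ} (M : FinMatroid n r) (w : Fin n → ℝ) :
    M.InBergmanFan w ↔ ∀ i : Fin n, ∃ B, M.IsMaxBasis w B ∧ i ∈ B := by
  classical
  constructor
  · -- Bergman fan → every element in a max basis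
    intro hberg e
    obtain ⟨B, hBmem, hBmax⟩ := M.bases.exists_max_image (fun B => ∑ i ∈ B, w i)
      M.bases_nonempty
    by_cases heB : e ∈ B
    · exact ⟨B, ⟨hBmem, hBmax⟩, heB⟩
    · have hdep : ¬ FamIndep M.bases (insert e B) := by
        rintro ⟨B', hB', hsub⟩
        have h1 : (insert e B).card = r + 1 := by
          rw [Finset.card_insert_of_notMem heB, M.card_bases B hBmem]
        have h2 := Finset.card_le_card hsub
        rw [h1, M.card_bases B' hB'] at h2
        omega
      obtain ⟨C, hCsub, hC⟩ := BergmanAux.exists_circuit_of_dep _ hdep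
      have heC : e ∈ C := by
        by_contra heC
        refine hC.1 ⟨B, hBmem, fun x hx => ?_⟩
        rcases Finset.mem_insert.1 (hCsub hx) with rfl | h
        · exact absurd hx heC
        · exact h
      obtain ⟨i, hiC, j, hjC, hij, hwij, hmin⟩ := hberg C hC
      -- pick f : a minimizer distinct from e
      obtain ⟨f, hfC, hfe, hfmin⟩ : ∃ f ∈ C, f ≠ e ∧ ∀ k ∈ C, w f ≤ w k := by
        by_cases hie : i = e
        · exact ⟨j, hjC, fun h => hij (hie.trans h.symm), fun k hk => hwij ▸ hmin k hk⟩
        · exact ⟨i, hiC, hie, hmin⟩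
      have hfB : f ∈ B := by
        rcases Finset.mem_insert.1 (hCsub hfC) with rfl | h
        · exact absurd rfl hfe
        · exact h
      obtain ⟨j', hj'C, hj'B, hj'bas⟩ := BergmanAux.exch_basis M hBmem hC hfB hfC
      have hj'e : j' = e := by
        rcases Finset.mem_insert.1 (hCsub hj'C) with rfl | h
        · rfl
        · exact absurd h hj'B
      subst hj'e
      have hsum : ∑ k ∈ B, w k ≤ ∑ k ∈ insert j' (B.erase f), w k := by
        rw [BergmanAux.sum_exch w hfB hj'B]
        have := hfmin j' hj'C
        linarith
      refine ⟨insert j' (B.erase f), ⟨hj'bas, fun B' hB' => ?_⟩, Finset.mem_insert_self _ _⟩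
      exact (hBmax B' hB').trans hsum
  · -- every element in a max basis → Bergman fan
    intro h C hC
    have hCne : C.Nonempty := by
      rcases Finset.eq_empty_or_nonempty C with rfl | hne
      · exact absurd ⟨M.bases_nonempty.choose, M.bases_nonempty.choose_spec,
          Finset.empty_subset _⟩ hC.1
      · exact hne
    obtain ⟨i, hiC, hmin⟩ := C.exists_min_image w hCne
    by_cases hsec : ∃ j ∈ C, j ≠ i ∧ w j = w i
    · obtain ⟨j, hjC, hji, hwj⟩ := hsec
      exact ⟨i, hiC, j, hjC, hji.symm, hwj.symm, hmin⟩
    · exfalso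
      push_neg at hsec
      have hstrict : ∀ j ∈ C, j ≠ i → w i < w j := fun j hj hji =>
        lt_of_le_of_ne (hmin j hj) (fun h => hsec j hj hji h.symm)
      obtain ⟨B, ⟨hBmem, hBmax⟩, hiB⟩ := h i
      obtain ⟨j, hjC, hjB, hjbas⟩ := BergmanAux.exch_basis M hBmem hC hiB hiC
      have hji : j ≠ i := fun h => hjB (h ▸ hiB)
      have := hBmax _ hjbas
      rw [BergmanAux.sum_exch w hiB hjB] at this
      have := hstrict j hjC hji
      linarith


/-- `w` lies in the Bergman fan iff every element of the ground set
lies in some `w`-maximal basis of `M`. -/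
theorem statement2 {n r : ℕ} (M : FinMatroid n r) (w : Fin n → ℝ) :
    M.InBergmanFan w ↔ ∀ i : Fin n, ∃ B, M.IsMaxBasis w B ∧ i ∈ B := statement2' M w
end

section
/- Let M be a matroid on the ground set [n] and let w ∈ ℝ^n. Then w lies in the Bergman fan B̃(M) if and only if the convex hull of the indicator vectors e_σ of the w-maximal bases σ of M contains a point all of whose n coordinates are strictly positive. -/
open Finset Pointwise

/-!
Both conditions say that every element lies in some `w`-maximal basis. If `i` lies in no
`w`-maximal basis `B`, the fundamental circuit of `i` with respect to `B` has its minimum only at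
`i`, since any other minimiser `j` could be exchanged for `i` without losing weight. Conversely,
if the minimum of `w` on a circuit `C` is attained only at `i` and `i ∈ B` with `B` maximal, the
strong exchange property gives `j ∈ C \ B` with `B - i + j` a heavier basis. On the convex side,
a convex combination of 0/1 vectors is positive in coordinate `i` iff one of them is, and the
barycentre of all of them is strictly positive once every coordinate is covered.
-/

theorem Finset.sum_insert_erase_eq {α β : Type*} [DecidableEq α] [AddCommGroup β]
    {s : Finset α} {a b : α} (ha : a ∈ s) (hb : b ∉ s) (f : α → β) :
    ∑ x ∈ insert b (s.erase a), f x = ∑ x ∈ s, f x - f a + f b := by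
  rw [Finset.sum_insert (fun h ↦ hb (Finset.mem_of_mem_erase h)), Finset.sum_erase_eq_sub ha,
    add_comm]

theorem Finset.coe_insert_erase {α : Type*} [DecidableEq α] {s : Finset α} {a b : α}
    (hba : b ≠ a) : (↑(insert b (s.erase a)) : Set α) = insert b ↑s \ {a} := by
  rw [Finset.coe_insert, Finset.coe_erase, Set.insert_sdiff_singleton_comm hba]

theorem exists_forall_pos_mem_convexHull_iff {ι : Type*} {s : Set (ι → ℝ)} (hs : s.Finite)
    (hne : s.Nonempty) (h0 : ∀ y ∈ s, 0 ≤ y) :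
    (∃ x ∈ convexHull ℝ s, ∀ i, 0 < x i) ↔ ∀ i, ∃ y ∈ s, 0 < y i := by
  refine ⟨fun ⟨x, hx, hpos⟩ i ↦ ?_, fun h ↦ ?_⟩
  · by_contra! hle
    have hsub : s ⊆ {y | y i ≤ 0} := hle
    exact (hpos i).not_ge
      (convexHull_min hsub (convex_halfSpace_le (LinearMap.proj i).isLinear 0) hx)
  · set t := hs.toFinset
    have hcard : (0 : ℝ) < t.card := by simpa [t] using hne
    refine ⟨t.centerMass (fun _ ↦ 1) id, t.centerMass_mem_convexHull (fun _ _ ↦ zero_le_one)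
      (by simpa using hcard) (fun y hy ↦ hs.mem_toFinset.1 hy), fun i ↦ ?_⟩
    obtain ⟨y, hy, hyi⟩ := h i
    simp only [Finset.centerMass, Finset.sum_const, nsmul_eq_mul, mul_one, one_smul, id,
      Pi.smul_apply, Finset.sum_apply, smul_eq_mul]
    exact mul_pos (inv_pos.2 hcard) (Finset.sum_pos' (fun z hz ↦ h0 z (hs.mem_toFinset.1 hz) i)
      ⟨y, hs.mem_toFinset.2 hy, hyi⟩)

lemma indVec_nonneg {n : ℕ} (S : Finset (Fin n)) : 0 ≤ indVec S := fun i ↦ by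
  unfold indVec; split_ifs <;> norm_num

lemma indVec_pos_iff {n : ℕ} {S : Finset (Fin n)} {i : Fin n} : 0 < indVec S i ↔ i ∈ S := by
  unfold indVec; split_ifs with h <;> simp [h]

namespace Matroid

variable {α : Type*} {M : Matroid α} {B C : Set α} {e f : α}

lemma IsBase.isBase_exchange_of_mem_fundCircuit (hB : M.IsBase B) (hfE : f ∈ M.E)
    (hfB : f ∉ B) (he : e ∈ M.fundCircuit f B) : M.IsBase (insert f B \ {e}) := by
  obtain rfl | hef := eq_or_ne e f
  · simpa [hfB] using hB
  exact hB.exchange_isBase_of_indep' (M.fundCircuit_subset_insert f B he |>.resolve_left hef)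
    hfB ((hB.indep.mem_fundCircuit_iff (by rwa [hB.closure_eq]) hfB).1 he)

lemma IsBase.exists_isBase_exchange_of_mem_isCircuit (hB : M.IsBase B) (hC : M.IsCircuit C)
    (heB : e ∈ B) (heC : e ∈ C) : ∃ f ∈ C \ B, M.IsBase (insert f B \ {e}) := by
  -- A circuit cannot meet the fundamental cocircuit of `e` in `e` alone.
  obtain ⟨f, ⟨hfC, hfK⟩, hfe⟩ : ∃ f ∈ C ∩ M.fundCocircuit e B, f ≠ e := by
    by_contra! h
    exact hC.inter_isCocircuit_ne_singleton (fundCocircuit_isCocircuit heB hB)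
      (Set.eq_singleton_iff_unique_mem.2 ⟨⟨heC, M.mem_fundCocircuit e B⟩, h⟩)
  have hfB : f ∉ B := fun hfB ↦ hfe <| by
    simpa using (M.fundCocircuit_inter_eq heB).subset ⟨hfK, hfB⟩
  exact ⟨f, ⟨hfC, hfB⟩, hB.isBase_exchange_of_mem_fundCircuit (hC.subset_ground hfC) hfB
    (hB.mem_fundCocircuit_iff_mem_fundCircuit.1 hfK)⟩

end Matroid

namespace FinMatroid

variable {n r : ℕ}

noncomputable def toMatroid (M : FinMatroid n r) : Matroid (Fin n) :=
  Matroid.ofIsBaseOfFinite Set.finite_univ (fun S ↦ ∃ B ∈ M.bases, ↑B = S)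
    (let ⟨B, hB⟩ := M.bases_nonempty; ⟨B, B, hB, rfl⟩)
    (by
      rintro _ _ ⟨B₁, hB₁, rfl⟩ ⟨B₂, hB₂, rfl⟩ e he
      obtain ⟨f, hf, hB⟩ := M.exchange B₁ hB₁ B₂ hB₂ e (by simpa using he)
      exact ⟨f, by simpa using hf, _, hB, by simp⟩)
    (fun _ _ ↦ Set.subset_univ _)

variable {M : FinMatroid n r}

lemma isBase_toMatroid_iff {B : Finset (Fin n)} : M.toMatroid.IsBase ↑B ↔ B ∈ M.bases := by
  change (∃ B' ∈ M.bases, (B' : Set (Fin n)) = B) ↔ _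
  simp only [Finset.coe_inj, exists_eq_right]

lemma indep_toMatroid_iff {I : Finset (Fin n)} : M.toMatroid.Indep ↑I ↔ M.Indep I := by
  simp only [Indep, FamIndep]
  constructor
  · rintro ⟨_, ⟨B, hB, rfl⟩, hIB⟩
    exact ⟨B, hB, by exact_mod_cast hIB⟩
  · rintro ⟨B, hB, hIB⟩
    exact ⟨B, isBase_toMatroid_iff.2 hB, by exact_mod_cast hIB⟩

lemma isCircuit_toMatroid_iff {C : Finset (Fin n)} :
    M.toMatroid.IsCircuit ↑C ↔ M.IsCircuit C := by
  rw [Matroid.isCircuit_iff_forall_ssubset, Matroid.dep_iff, indep_toMatroid_iff]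
  refine ⟨fun ⟨⟨hC, _⟩, h⟩ ↦ ⟨hC, fun D hD ↦ ?_⟩,
    fun ⟨hC, h⟩ ↦ ⟨⟨hC, Set.subset_univ _⟩, fun I hI ↦ ?_⟩⟩
  · exact indep_toMatroid_iff.1 (h (by exact_mod_cast hD))
  · lift I to Finset (Fin n) using (Set.toFinite I)
    exact indep_toMatroid_iff.2 (h _ (by exact_mod_cast hI))

lemma IsCircuit.nonempty {C : Finset (Fin n)} (hC : M.IsCircuit C) : C.Nonempty := by
  exact_mod_cast (isCircuit_toMatroid_iff.2 hC).nonempty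

lemma exists_exchange_of_mem_isCircuit {B C : Finset (Fin n)} (hB : B ∈ M.bases)
    (hC : M.IsCircuit C) {e : Fin n} (heB : e ∈ B) (heC : e ∈ C) :
    ∃ f ∈ C, f ∉ B ∧ insert f (B.erase e) ∈ M.bases := by
  obtain ⟨f, ⟨hfC, hfB⟩, hB'⟩ :=
    (isBase_toMatroid_iff.2 hB).exists_isBase_exchange_of_mem_isCircuit
      (isCircuit_toMatroid_iff.2 hC) heB heC
  have hfe : f ≠ e := ne_of_mem_of_not_mem heB hfB |>.symm
  exact ⟨f, hfC, hfB, isBase_toMatroid_iff.1 (by rwa [Finset.coe_insert_erase hfe])⟩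

lemma exists_isCircuit_exchange_of_notMem {B : Finset (Fin n)} (hB : B ∈ M.bases) {f : Fin n}
    (hfB : f ∉ B) :
    ∃ C, M.IsCircuit C ∧ f ∈ C ∧
      ∀ e ∈ C, e ≠ f → e ∈ B ∧ insert f (B.erase e) ∈ M.bases := by
  have hB' := isBase_toMatroid_iff.2 hB
  have hfin := (M.toMatroid.fundCircuit f ↑B).toFinite
  refine ⟨hfin.toFinset, isCircuit_toMatroid_iff.1 ?_, by simp [Matroid.mem_fundCircuit],
    fun e he hef ↦ ⟨?_, isBase_toMatroid_iff.1 ?_⟩⟩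
  · rw [hfin.coe_toFinset]
    exact hB'.fundCircuit_isCircuit (Set.mem_univ f) (by exact_mod_cast hfB)
  · rw [hfin.mem_toFinset] at he
    exact_mod_cast (M.toMatroid.fundCircuit_subset_insert f ↑B he).resolve_left hef
  · rw [hfin.mem_toFinset] at he
    rw [Finset.coe_insert_erase hef.symm]
    exact hB'.isBase_exchange_of_mem_fundCircuit (Set.mem_univ f) (by exact_mod_cast hfB) he

variable {w : Fin n → ℝ} {B : Finset (Fin n)} {e f : Fin n}

lemma exists_isMaxBasis (M : FinMatroid n r) (w : Fin n → ℝ) : ∃ B, M.IsMaxBasis w B :=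
  let ⟨B, hB, hmax⟩ := M.bases.exists_max_image (∑ i ∈ ·, w i) M.bases_nonempty
  ⟨B, hB, hmax⟩

lemma IsMaxBasis.le_of_exchange (hB : M.IsMaxBasis w B) (he : e ∈ B) (hf : f ∉ B)
    (hB' : insert f (B.erase e) ∈ M.bases) : w f ≤ w e := by
  have := hB.2 _ hB'
  rw [Finset.sum_insert_erase_eq he hf] at this
  linarith

lemma IsMaxBasis.exchange (hB : M.IsMaxBasis w B) (he : e ∈ B) (hf : f ∉ B)
    (hB' : insert f (B.erase e) ∈ M.bases) (hw : w e ≤ w f) :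
    M.IsMaxBasis w (insert f (B.erase e)) :=
  ⟨hB', fun B'' hB'' ↦
    (hB.2 B'' hB'').trans (by rw [Finset.sum_insert_erase_eq he hf]; linarith)⟩

lemma InBergmanFan.exists_isMaxBasis_mem (h : M.InBergmanFan w) (i : Fin n) :
    ∃ B, M.IsMaxBasis w B ∧ i ∈ B := by
  obtain ⟨B, hB⟩ := M.exists_isMaxBasis w
  by_cases hiB : i ∈ B
  · exact ⟨B, hB, hiB⟩
  obtain ⟨C, hC, hiC, hexch⟩ := exists_isCircuit_exchange_of_notMem hB.1 hiB
  obtain ⟨a, haC, b, hbC, hab, hwab, hmin⟩ := h C hC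
  obtain ⟨j, hjC, hji, hwj⟩ : ∃ j ∈ C, j ≠ i ∧ w j ≤ w i := by
    by_cases hai : a = i
    · exact ⟨b, hbC, hai ▸ hab.symm, hwab ▸ hmin i hiC⟩
    · exact ⟨a, haC, hai, hmin i hiC⟩
  obtain ⟨hjB, hB'⟩ := hexch j hjC hji
  exact ⟨_, hB.exchange hjB hiB hB' hwj, Finset.mem_insert_self i _⟩

lemma inBergmanFan_of_forall_exists_isMaxBasis_mem
    (h : ∀ i, ∃ B, M.IsMaxBasis w B ∧ i ∈ B) : M.InBergmanFan w := by
  intro C hC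
  obtain ⟨i, hiC, hmin⟩ := C.exists_min_image w hC.nonempty
  obtain ⟨B, hB, hiB⟩ := h i
  obtain ⟨j, hjC, hjB, hB'⟩ := exists_exchange_of_mem_isCircuit hB.1 hC hiB hiC
  exact ⟨i, hiC, j, hjC, ne_of_mem_of_not_mem hiB hjB,
    le_antisymm (hmin j hjC) (hB.le_of_exchange hiB hjB hB'), hmin⟩

theorem inBergmanFan_iff_forall_exists_isMaxBasis_mem :
    M.InBergmanFan w ↔ ∀ i, ∃ B, M.IsMaxBasis w B ∧ i ∈ B :=
  ⟨InBergmanFan.exists_isMaxBasis_mem, inBergmanFan_of_forall_exists_isMaxBasis_mem⟩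

end FinMatroid

/-- `w` lies in the Bergman fan iff the convex hull of the indicator
vectors of the `w`-maximal bases contains a strictly positive point. -/
theorem statement3 {n r : ℕ} (M : FinMatroid n r) (w : Fin n → ℝ) :
    M.InBergmanFan w ↔
      ∃ x ∈ convexHull ℝ (indVec '' {B | M.IsMaxBasis w B}), ∀ i, 0 < x i := by
  rw [FinMatroid.inBergmanFan_iff_forall_exists_isMaxBasis_mem,
    exists_forall_pos_mem_convexHull_iff ((Set.toFinite {B | M.IsMaxBasis w B}).image indVec)
      (Set.Nonempty.image indVec (M.exists_isMaxBasis w))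
      (Set.forall_mem_image.2 fun B _ ↦ indVec_nonneg B)]
  simp only [Set.exists_mem_image, indVec_pos_iff, Set.mem_ofPred_eq]
end

section
/- For every family 𝓕 of nonempty subsets of [r] there exists a unique building set 𝓕̂ in the Boolean lattice 2^[r] such that 𝓕 ⊆ 𝓕̂ and 𝓕̂ ⊆ 𝓗 for every building set 𝓗 in 2^[r] with 𝓕 ⊆ 𝓗 (the building closure of 𝓕). -/
open Finset Pointwise

theorem bb_singleton {r : ℕ} {𝓗 : Set (Finset (Fin r))} (hb : BoolBuilding 𝓗)
    (i : Fin r) : ({i} : Finset (Fin r)) ∈ 𝓗 := by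
  classical
  obtain ⟨k, g, _, hg1, _, _, e, he⟩ := hb.2 {i} (by simp)
  obtain ⟨y, hy⟩ := e.surjective ⟨{i}, subset_rfl⟩
  have h1 : (univ.sup fun j => (y j).1) = {i} := by rw [← he y, hy]
  have : i ∈ univ.sup fun j => (y j).1 := by rw [h1]; simp
  obtain ⟨j, _, hj⟩ := Finset.mem_sup.1 this
  have hsub : g j ⊆ {i} := (hg1 j).2
  have hmem : i ∈ g j := (y j).2 hj
  have : g j = {i} := by
    apply Finset.Subset.antisymm hsub
    simp [hmem]
  rw [← this]; exact (hg1 j).1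

theorem bb_union {r : ℕ} {𝓗 : Set (Finset (Fin r))} (hb : BoolBuilding 𝓗)
    {G H : Finset (Fin r)} (hG : G ∈ 𝓗) (hH : H ∈ 𝓗) (hGH : (G ∩ H).Nonempty) :
    G ∪ H ∈ 𝓗 := by
  classical
  obtain ⟨a, ha⟩ := hGH
  have haG : a ∈ G := Finset.mem_of_mem_inter_left ha
  have haH : a ∈ H := Finset.mem_of_mem_inter_right ha
  have hXne : (G ∪ H : Finset (Fin r)) ≠ ∅ := by
    intro h0
    have : a ∈ G ∪ H := Finset.mem_union_left _ haG
    simp [h0] at this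
  obtain ⟨k, g, _, hg1, hg2, hg3, e, he⟩ := hb.2 (G ∪ H) hXne
  obtain ⟨i, hGi⟩ := hg3 G hG Finset.subset_union_left
  obtain ⟨j, hHj⟩ := hg3 H hH Finset.subset_union_right
  -- disjointness
  have hij : i = j := by
    by_contra hne
    set y : ∀ l : Fin k, {F : Finset (Fin r) // F ⊆ g l} := fun l =>
      if h : l = i then ⟨{a}, by subst h; exact Finset.singleton_subset_iff.2 (hGi haG)⟩
      else ⟨∅, Finset.empty_subset _⟩ with hy
    set z : ∀ l : Fin k, {F : Finset (Fin r) // F ⊆ g l} := fun l =>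
      if h : l = j then ⟨{a}, by subst h; exact Finset.singleton_subset_iff.2 (hHj haH)⟩
      else ⟨∅, Finset.empty_subset _⟩ with hz
    have hsup : ∀ (w : ∀ l : Fin k, {F : Finset (Fin r) // F ⊆ g l}) (m : Fin k),
        (∀ l, (w l).1 ⊆ ({a} : Finset (Fin r))) → (w m).1 = {a} →
        (univ.sup fun l => (w l).1) = {a} := by
      intro w m hle hm
      apply Finset.Subset.antisymm
      · exact Finset.sup_le fun l _ => hle l
      · rw [← hm]; exact Finset.le_sup (f := fun l => (w l).1) (Finset.mem_univ m)
    have hey : (e y).1 = {a} := by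
      rw [he]
      refine hsup y i (fun l => ?_) (by simp [hy])
      by_cases h : l = i <;> simp [hy, h]
    have hez : (e z).1 = {a} := by
      rw [he]
      refine hsup z j (fun l => ?_) (by simp [hz])
      by_cases h : l = j <;> simp [hz, h]
    have : y = z := e.injective (Subtype.ext (hey.trans hez.symm))
    have hcontra : ({a} : Finset (Fin r)) = ∅ := by
      have := congrFun this i
      rw [hy, hz] at this
      simpa [hne] using congrArg Subtype.val this
    simp at hcontra
  subst hij
  have hsub : G ∪ H ⊆ g i := Finset.union_subset hGi hHj
  have : g i = G ∪ H := Finset.Subset.antisymm (hg1 i).2 hsub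
  rw [← this]; exact (hg1 i).1

theorem building_of {r : ℕ} (𝓖 : Set (Finset (Fin r)))
    (hne : ∀ F ∈ 𝓖, F ≠ ∅) (hsing : ∀ i : Fin r, ({i} : Finset (Fin r)) ∈ 𝓖)
    (hun : ∀ G ∈ 𝓖, ∀ H ∈ 𝓖, (G ∩ H : Finset (Fin r)).Nonempty → G ∪ H ∈ 𝓖) :
    BoolBuilding 𝓖 := by
  classical
  refine ⟨hne, fun X hX => ?_⟩
  set M : Finset (Finset (Fin r)) :=
    X.powerset.filter (fun G => G ∈ 𝓖 ∧ ∀ H ∈ 𝓖, H ⊆ X → G ⊆ H → G = H) with hM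
  have hMmem : ∀ G ∈ M, G ∈ 𝓖 ∧ G ⊆ X ∧ ∀ H ∈ 𝓖, H ⊆ X → G ⊆ H → G = H := by
    intro G hG
    simp only [hM, Finset.mem_filter, Finset.mem_powerset] at hG
    exact ⟨hG.2.1, hG.1, hG.2.2⟩
  have hmaxabove : ∀ H ∈ 𝓖, H ⊆ X → ∃ G ∈ M, H ⊆ G := by
    intro H hH hHX
    set T : Finset (Finset (Fin r)) :=
      X.powerset.filter (fun G => G ∈ 𝓖 ∧ H ⊆ G) with hT
    have hTne : T.Nonempty := ⟨H, by simp [hT, Finset.mem_powerset, hHX, hH]⟩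
    obtain ⟨G, hGT, hGmax⟩ := T.exists_max_image Finset.card hTne
    simp only [hT, Finset.mem_filter, Finset.mem_powerset] at hGT
    refine ⟨G, ?_, hGT.2.2⟩
    simp only [hM, Finset.mem_filter, Finset.mem_powerset]
    refine ⟨hGT.1, hGT.2.1, fun H' hH' hH'X hGH' => ?_⟩
    have hH'T : H' ∈ T := by
      simp only [hT, Finset.mem_filter, Finset.mem_powerset]
      exact ⟨hH'X, hH', hGT.2.2.trans hGH'⟩
    exact Finset.eq_of_subset_of_card_le hGH' (hGmax H' hH'T)
  have hMdisj : ∀ G ∈ M, ∀ G' ∈ M, G ≠ G' → ∀ a, a ∈ G → a ∈ G' → False := by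
    intro G hG G' hG' hne' a haG haG'
    obtain ⟨h1, h2, h3⟩ := hMmem G hG
    obtain ⟨h1', h2', h3'⟩ := hMmem G' hG'
    have hu : G ∪ G' ∈ 𝓖 := hun G h1 G' h1' ⟨a, Finset.mem_inter.2 ⟨haG, haG'⟩⟩
    have huX : G ∪ G' ⊆ X := Finset.union_subset h2 h2'
    have e1 : G = G ∪ G' := h3 _ hu huX Finset.subset_union_left
    have e2 : G' = G ∪ G' := h3' _ hu huX Finset.subset_union_right
    exact hne' (e1.trans e2.symm)
  -- enumeration
  set k := M.card with hk
  set g : Fin k → Finset (Fin r) := fun i => (M.equivFin.symm i).1 with hg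
  have hgM : ∀ i, g i ∈ M := fun i => (M.equivFin.symm i).2
  have ginj : Function.Injective g := fun i j hij => by
    have : M.equivFin.symm i = M.equivFin.symm j := Subtype.ext hij
    exact M.equivFin.symm.injective this
  have hgmem : ∀ G ∈ M, ∃ i, g i = G := by
    intro G hG
    exact ⟨M.equivFin ⟨G, hG⟩, by simp [hg]⟩
  have hgX : ∀ i, g i ⊆ X := fun i => (hMmem _ (hgM i)).2.1
  have hg𝓖 : ∀ i, g i ∈ 𝓖 := fun i => (hMmem _ (hgM i)).1
  have hgdisj : ∀ i j, i ≠ j → ∀ a, a ∈ g i → a ∈ g j → False := by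
    intro i j hij a hai haj
    exact hMdisj _ (hgM i) _ (hgM j) (fun h => hij (ginj h)) a hai haj
  have hgcover : ∀ x ∈ X, ∃ i, x ∈ g i := by
    intro x hx
    obtain ⟨G, hG, hxG⟩ := hmaxabove {x} (hsing x) (Finset.singleton_subset_iff.2 hx)
    obtain ⟨i, hi⟩ := hgmem G hG
    exact ⟨i, hi ▸ hxG (Finset.mem_singleton_self x)⟩
  refine ⟨k, g, ginj, fun i => ⟨hg𝓖 i, hgX i⟩,
    fun i H hH hHX hgH => (hMmem _ (hgM i)).2.2 H hH hHX hgH, ?_, ?_⟩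
  · intro H hH hHX
    obtain ⟨G, hG, hHG⟩ := hmaxabove H hH hHX
    obtain ⟨i, hi⟩ := hgmem G hG
    exact ⟨i, hi ▸ hHG⟩
  · -- the order iso
    set toF : (∀ i : Fin k, {F : Finset (Fin r) // F ⊆ g i}) → {F : Finset (Fin r) // F ⊆ X} :=
      fun y => ⟨Finset.univ.sup fun i => (y i).1,
        Finset.sup_le fun i _ => (y i).2.trans (hgX i)⟩ with htoF
    set invF : {F : Finset (Fin r) // F ⊆ X} → (∀ i : Fin k, {F : Finset (Fin r) // F ⊆ g i}) :=
      fun F i => ⟨F.1 ∩ g i, Finset.inter_subset_right⟩ with hinvF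
    have hli : Function.LeftInverse invF toF := by
      intro y
      funext i
      apply Subtype.ext
      ext a
      simp only [hinvF, htoF, Finset.mem_inter, Finset.mem_sup, Finset.mem_univ, true_and]
      constructor
      · rintro ⟨⟨j, haj⟩, hai⟩
        by_cases h : j = i
        · exact h ▸ haj
        · exact absurd ((y j).2 haj) fun hh => (hgdisj j i h a hh hai)
      · intro ha
        exact ⟨⟨i, ha⟩, (y i).2 ha⟩
    have hri : Function.RightInverse invF toF := by
      intro F
      apply Subtype.ext
      ext a
      simp only [htoF, hinvF, Finset.mem_sup, Finset.mem_univ, true_and, Finset.mem_inter]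
      constructor
      · rintro ⟨i, haF, _⟩; exact haF
      · intro ha
        obtain ⟨i, hi⟩ := hgcover a (F.2 ha)
        exact ⟨i, ha, hi⟩
    set E : (∀ i : Fin k, {F : Finset (Fin r) // F ⊆ g i}) ≃ {F : Finset (Fin r) // F ⊆ X} :=
      ⟨toF, invF, hli, hri⟩ with hE
    have hmono : Monotone E := by
      intro y z hyz
      simp only [hE, htoF, Equiv.coe_fn_mk, Subtype.mk_le_mk]
      refine Finset.sup_le fun i _ => ?_
      have h1 : (y i).1 ⊆ (z i).1 := hyz i
      exact h1.trans (Finset.le_sup (f := fun i => (z i).1) (Finset.mem_univ i))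
    have hmono' : Monotone E.symm := by
      intro F G hFG i
      simp only [hE, hinvF, Equiv.coe_fn_symm_mk, Subtype.mk_le_mk]
      exact Finset.inter_subset_inter hFG Finset.Subset.rfl
    exact ⟨E.toOrderIso hmono hmono', fun y => rfl⟩

/-- Every family of nonempty subsets of `[r]` has a unique minimal
enlargement to a building set in the Boolean lattice `2^[r]` (its building closure). -/
theorem statement7 {r : ℕ} (𝓕 : Set (Finset (Fin r))) (h : ∀ F ∈ 𝓕, F ≠ ∅) :
    ∃! 𝓕hat : Set (Finset (Fin r)),
      BoolBuilding 𝓕hat ∧ 𝓕 ⊆ 𝓕hat ∧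
        ∀ 𝓗 : Set (Finset (Fin r)), BoolBuilding 𝓗 → 𝓕 ⊆ 𝓗 → 𝓕hat ⊆ 𝓗 := by
  classical
  have hGoodDef : True := trivial
  set hat : Set (Finset (Fin r)) :=
    {S | ∀ 𝓗 : Set (Finset (Fin r)),
      (𝓕 ⊆ 𝓗 ∧ (∀ F ∈ 𝓗, F ≠ ∅) ∧ (∀ i : Fin r, ({i} : Finset (Fin r)) ∈ 𝓗) ∧
        ∀ G ∈ 𝓗, ∀ H ∈ 𝓗, (G ∩ H : Finset (Fin r)).Nonempty → G ∪ H ∈ 𝓗) → S ∈ 𝓗}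
    with hhat
  have hfull : 𝓕 ⊆ {S : Finset (Fin r) | S ≠ ∅} ∧
      (∀ F ∈ {S : Finset (Fin r) | S ≠ ∅}, F ≠ ∅) ∧
      (∀ i : Fin r, ({i} : Finset (Fin r)) ∈ {S : Finset (Fin r) | S ≠ ∅}) ∧
      ∀ G ∈ {S : Finset (Fin r) | S ≠ ∅}, ∀ H ∈ {S : Finset (Fin r) | S ≠ ∅},
        (G ∩ H : Finset (Fin r)).Nonempty → G ∪ H ∈ {S : Finset (Fin r) | S ≠ ∅} := by
    refine ⟨h, fun F hF => hF, fun i => by simp, fun G hG H hH _ => ?_⟩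
    simp only [Set.mem_setOf_eq] at *
    intro h0
    exact hG (Finset.union_eq_empty.1 h0).1
  have hhatne : ∀ F ∈ hat, F ≠ ∅ := fun F hF => hF _ hfull
  have hhatsing : ∀ i : Fin r, ({i} : Finset (Fin r)) ∈ hat := by
    intro i 𝓗 h𝓗
    exact h𝓗.2.2.1 i
  have hhatun : ∀ G ∈ hat, ∀ H ∈ hat, (G ∩ H : Finset (Fin r)).Nonempty → G ∪ H ∈ hat := by
    intro G hG H hH hne 𝓗 h𝓗
    exact h𝓗.2.2.2 G (hG 𝓗 h𝓗) H (hH 𝓗 h𝓗) hne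
  have hhat𝓕 : 𝓕 ⊆ hat := fun S hS 𝓗 h𝓗 => h𝓗.1 hS
  have hbuild : BoolBuilding hat := building_of hat hhatne hhatsing hhatun
  refine ⟨hat, ⟨hbuild, hhat𝓕, ?_⟩, ?_⟩
  · intro 𝓗 hb h𝓕
    intro S hS
    exact hS 𝓗 ⟨h𝓕, hb.1, fun i => bb_singleton hb i, fun G hG H hH hne => bb_union hb hG hH hne⟩
  · rintro 𝓖 ⟨hb𝓖, h𝓕𝓖, hmin𝓖⟩
    apply Set.Subset.antisymm
    · exact hmin𝓖 hat hbuild hhat𝓕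
    · intro S hS
      exact hS 𝓖 ⟨h𝓕𝓖, hb𝓖.1, fun i => bb_singleton hb𝓖 i,
        fun G hG H hH hne => bb_union hb𝓖 hG hH hne⟩
end

section
/- Let 𝓕 be a finite nonempty family of nonempty subsets of [r], and let c be the number of equivalence classes of the equivalence relation on [r] generated by declaring i ∼ j whenever i, j ∈ F for some F ∈ 𝓕. Then the dimension of the affine hull of the polytope Δ_𝓕 equals r − c. -/
open Finset Pointwise

/-! The direction of a Minkowski sum of nonempty sets is the sum of their directions, and the
direction of `Δ_F` is spanned by the edge vectors `e_i - e_j` with `i, j ∈ F`. Hence the direction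
of `Δ_𝓕` is spanned by the `e_i - e_j` with `i ∼ j`, which is the kernel of the surjective map
`ℝ^r → ℝ^([r]/∼)` summing the coordinates over each class; rank–nullity gives `r - c`. -/

section MinkowskiSum
variable {k V : Type*} [Ring k] [AddCommGroup V] [Module k V]

theorem Submodule.span_add_of_zero_mem {s t : Set V} (hs : (0 : V) ∈ s) (ht : (0 : V) ∈ t) :
    Submodule.span k (s + t) = Submodule.span k s ⊔ Submodule.span k t := by
  apply le_antisymm
  · rw [Submodule.span_le]
    rintro _ ⟨x, hx, y, hy, rfl⟩
    exact Submodule.add_mem_sup (Submodule.subset_span hx) (Submodule.subset_span hy)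
  · exact sup_le (Submodule.span_mono fun x hx => ⟨x, hx, 0, ht, add_zero x⟩)
      (Submodule.span_mono fun y hy => ⟨0, hs, y, hy, zero_add y⟩)

theorem vectorSpan_add {s t : Set V} (hs : s.Nonempty) (ht : t.Nonempty) :
    vectorSpan k (s + t) = vectorSpan k s ⊔ vectorSpan k t := by
  change Submodule.span k (s + t - (s + t)) = Submodule.span k (s - s) ⊔ Submodule.span k (t - t)
  rw [← sub_add_sub_comm]
  exact Submodule.span_add_of_zero_mem hs.zero_mem_sub ht.zero_mem_sub

theorem vectorSpan_finset_sum {ι : Type*} {u : Finset ι} (hu : u.Nonempty) {s : ι → Set V}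
    (hs : ∀ i ∈ u, (s i).Nonempty) :
    vectorSpan k (∑ i ∈ u, s i) = u.sup fun i => vectorSpan k (s i) := by
  induction hu using Finset.Nonempty.cons_induction with
  | singleton i => simp
  | cons i u hi hu ih =>
    have hs' : ∀ j ∈ u, (s j).Nonempty := fun j hj => hs j (mem_cons_of_mem hj)
    have hsum : (∑ j ∈ u, s j).Nonempty := by
      choose! x hx using hs'
      exact ⟨_, Set.finsetSum_mem_finsetSum u s x hx⟩
    rw [sum_cons, sup_cons, vectorSpan_add (hs i (mem_cons_self i u)) hsum, ih hs']

end MinkowskiSum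

section EdgeVectors
variable (K : Type*) {ι : Type*} [Ring K] [DecidableEq ι]

def edgeVectors (rel : ι → ι → Prop) : Set (ι → K) :=
  {v | ∃ i j, rel i j ∧ Pi.single i 1 - Pi.single j 1 = v}

variable {K}

theorem single_sub_single_mem_span_edgeVectors {rel : ι → ι → Prop} {i j : ι}
    (hij : Relation.EqvGen rel i j) :
    (Pi.single i 1 - Pi.single j 1 : ι → K) ∈ Submodule.span K (edgeVectors K rel) := by
  induction hij with
  | rel a b hab => exact Submodule.subset_span ⟨a, b, hab, rfl⟩
  | refl a => simp
  | symm a b _ ih => simpa using Submodule.neg_mem _ ih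
  | trans a b c _ _ ih₁ ih₂ => simpa using Submodule.add_mem _ ih₁ ih₂

theorem span_edgeVectors_eqvGen (rel : ι → ι → Prop) :
    Submodule.span K (edgeVectors K (Relation.EqvGen rel)) =
      Submodule.span K (edgeVectors K rel) := by
  refine le_antisymm (Submodule.span_le.2 ?_) (Submodule.span_mono ?_)
  · rintro _ ⟨i, j, hij, rfl⟩
    exact single_sub_single_mem_span_edgeVectors hij
  · rintro _ ⟨i, j, hij, rfl⟩
    exact ⟨i, j, .rel i j hij, rfl⟩

theorem sup_span_edgeVectors {α : Type*} (s : Finset α) (rel : α → ι → ι → Prop) :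
    s.sup (fun a => Submodule.span K (edgeVectors K (rel a))) =
      Submodule.span K (edgeVectors K fun i j => ∃ a ∈ s, rel a i j) := by
  rw [Finset.sup_eq_iSup, ← Submodule.span_iUnion₂]
  congr 1
  ext v
  simp only [edgeVectors, Set.mem_iUnion, Set.mem_ofPred_eq, exists_prop]
  exact ⟨fun ⟨a, ha, i, j, hij, hv⟩ => ⟨i, j, ⟨a, ha, hij⟩, hv⟩,
    fun ⟨i, j, ⟨a, ha, hij⟩, hv⟩ => ⟨a, ha, i, j, hij, hv⟩⟩

end EdgeVectors

section FiberSum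
variable {K ι κ : Type*} [Ring K] [Fintype ι] [DecidableEq κ]

variable (K) in
def fiberSum (f : ι → κ) : (ι → K) →ₗ[K] (κ → K) :=
  ∑ i, LinearMap.single K (fun _ => K) (f i) ∘ₗ LinearMap.proj i

theorem fiberSum_apply (f : ι → κ) (x : ι → K) :
    fiberSum K f x = ∑ i, Pi.single (f i) (x i) := by
  simp [fiberSum]

theorem fiberSum_single [DecidableEq ι] (f : ι → κ) (i : ι) (c : K) :
    fiberSum K f (Pi.single i c) = Pi.single (f i) c := by
  rw [fiberSum_apply, Finset.sum_eq_single i (fun j _ hj => by simp [hj]) (by simp),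
    Pi.single_eq_same]

theorem fiberSum_comp [Fintype κ] [DecidableEq ι] {μ : Type*} [DecidableEq μ] (f : ι → κ)
    (g : κ → μ) (x : ι → K) : fiberSum K g (fiberSum K f x) = fiberSum K (g ∘ f) x := by
  simp only [fiberSum_apply (f := f), map_sum, fiberSum_single, fiberSum_apply (f := g ∘ f),
    Function.comp_apply]

theorem fiberSum_id [DecidableEq ι] (x : ι → K) : fiberSum K id x = x := by
  rw [fiberSum_apply]
  exact Finset.univ_sum_single x

theorem fiberSum_surjective [Fintype κ] [DecidableEq ι] {f : ι → κ} (hf : f.Surjective) :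
    Function.Surjective (fiberSum K f) := fun y =>
  ⟨fiberSum K (Function.surjInv hf) y, by
    rw [fiberSum_comp, (Function.rightInverse_surjInv hf).comp_eq_id, fiberSum_id]⟩

theorem ker_fiberSum [Fintype κ] [DecidableEq ι] {f : ι → κ} (hf : f.Surjective) :
    LinearMap.ker (fiberSum K f) = Submodule.span K (edgeVectors K fun i j => f i = f j) := by
  refine le_antisymm (fun x hx => ?_) (Submodule.span_le.2 ?_)
  · set g := Function.surjInv hf
    have hgfx : fiberSum K (g ∘ f) x = 0 := by
      rw [← fiberSum_comp, LinearMap.mem_ker.1 hx, map_zero]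
    have hx_eq : x = ∑ i, x i • (Pi.single i 1 - Pi.single (g (f i)) 1) := by
      conv_lhs => rw [← fiberSum_id x, ← sub_zero (fiberSum K id x), ← hgfx]
      simp only [fiberSum_apply, ← sum_sub_distrib, smul_sub, id, Function.comp_apply]
      congr! 2 <;> simpa using Pi.single_smul' (α := K) _ _ (1 : K)
    rw [hx_eq]
    exact Submodule.sum_mem _ fun i _ => Submodule.smul_mem _ _
      (Submodule.subset_span ⟨i, g (f i), (Function.surjInv_eq hf _).symm, rfl⟩)
  · rintro _ ⟨i, j, hij, rfl⟩
    rw [SetLike.mem_coe, LinearMap.mem_ker, map_sub, fiberSum_single, fiberSum_single, hij,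
      sub_self]

theorem ker_fiberSum_quotMk [DecidableEq ι] (rel : ι → ι → Prop) [Fintype (Quot rel)]
    [DecidableEq (Quot rel)] :
    LinearMap.ker (fiberSum K (Quot.mk rel)) = Submodule.span K (edgeVectors K rel) := by
  have hrel : (fun i j => Quot.mk rel i = Quot.mk rel j) = Relation.EqvGen rel := by
    ext i j
    exact ⟨Quot.eqvGen_exact, Quot.eqvGen_sound⟩
  rw [ker_fiberSum Quot.mk_surjective, hrel, span_edgeVectors_eqvGen]

theorem finrank_ker_fiberSum {K : Type*} [DivisionRing K] [Fintype κ] [DecidableEq ι]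
    {f : ι → κ} (hf : f.Surjective) :
    Module.finrank K (LinearMap.ker (fiberSum K f)) = Fintype.card ι - Fintype.card κ := by
  have rank_nullity := (fiberSum K f).finrank_range_add_finrank_ker
  rw [LinearMap.range_eq_top.2 (fiberSum_surjective hf), finrank_top,
    Module.finrank_fintype_fun_eq_card, Module.finrank_fintype_fun_eq_card] at rank_nullity
  omega

end FiberSum

section Simplex
variable {r : ℕ}

theorem faceSimplex_nonempty {F : Finset (Fin r)} (hF : F.Nonempty) : (faceSimplex F).Nonempty :=
  convexHull_nonempty_iff.2 ((coe_nonempty.2 hF).image _)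

theorem vectorSpan_faceSimplex (F : Finset (Fin r)) :
    vectorSpan ℝ (faceSimplex F) =
      Submodule.span ℝ (edgeVectors ℝ fun i j => i ∈ F ∧ j ∈ F) := by
  rw [faceSimplex, ← direction_affineSpan, affineSpan_convexHull, direction_affineSpan,
    vectorSpan_def]
  congr 1
  ext v
  simp [edgeVectors, Set.mem_vsub, and_assoc]

theorem vectorSpan_minkSum {𝓕 : Finset (Finset (Fin r))} (h𝓕 : 𝓕.Nonempty)
    (h : ∀ F ∈ 𝓕, F ≠ ∅) :
    vectorSpan ℝ (minkSum 𝓕) =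
      Submodule.span ℝ (edgeVectors ℝ fun i j => ∃ F ∈ 𝓕, i ∈ F ∧ j ∈ F) := by
  rw [minkSum, vectorSpan_finset_sum h𝓕 fun F hF =>
    faceSimplex_nonempty (nonempty_iff_ne_empty.2 (h F hF))]
  simp_rw [vectorSpan_faceSimplex]
  exact sup_span_edgeVectors 𝓕 _

end Simplex

/-- The dimension of the Minkowski sum `Δ_𝓕` equals `r - c`, where `c`
is the number of classes of the equivalence relation generated by letting `i ∼ j`
whenever `i` and `j` lie in a common member of `𝓕`. -/
theorem statement8 {r : ℕ} (𝓕 : Finset (Finset (Fin r))) (h𝓕 : 𝓕.Nonempty)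
    (h : ∀ F ∈ 𝓕, F ≠ ∅) :
    Module.finrank ℝ (affineSpan ℝ (minkSum 𝓕)).direction =
      r - Nat.card (Quot (fun i j : Fin r => ∃ F ∈ 𝓕, i ∈ F ∧ j ∈ F)) := by
  classical
  have := Fintype.ofFinite (Quot fun i j : Fin r => ∃ F ∈ 𝓕, i ∈ F ∧ j ∈ F)
  rw [direction_affineSpan, vectorSpan_minkSum h𝓕 h, ← ker_fiberSum_quotMk _,
    finrank_ker_fiberSum Quot.mk_surjective, Fintype.card_fin, Nat.card_eq_fintype_card]
end

section
/- Let 𝓕 be a finite nonempty family of nonempty subsets of [r]. Then Δ_𝓕 equals the set of all vectors x ∈ ℝ^r with x_i ≥ 0 for all i, Σ_{i=1}^r x_i = |𝓕|, and Σ_{i∈G} x_i ≥ |{F ∈ 𝓕 : F ⊆ G}| for every subset G ⊆ [r]. -/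
open Finset Pointwise

/-! Writing a point of `Δ_𝓕` as `∑ F, y F` with each `y F` a probability vector supported on
`F` gives the inequalities. Conversely `Δ_𝓕` is compact and convex, so by Hahn–Banach it
suffices to bound every linear functional `⟨w, ·⟩` at `x` by its maximum on `Δ_𝓕`, which is
`∑ F, max_{i ∈ F} w i`, attained at a sum of vertices. After a shift making `w ≥ 0`, write `w`
as a sum of layers `m • indVec s` over a decreasing chain of sets `s`; on each layer the
inequality for `G = sᶜ` gives `∑_{i ∈ s} x i ≤ #{F ∈ 𝓕 | F meets s}`, and `m` times this is
exactly what the layer contributes to `∑ F, max_{i ∈ F} w i`. -/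

section MinkowskiSumOfSimplices

variable {r : ℕ}

lemma single_mem_faceSimplex {F : Finset (Fin r)} {i : Fin r} (hi : i ∈ F) :
    (Pi.single i 1 : Fin r → ℝ) ∈ faceSimplex F :=
  subset_convexHull ℝ _ ⟨i, hi, rfl⟩

lemma faceSimplex_subset (F : Finset (Fin r)) :
    faceSimplex F ⊆ {z | (∀ i, 0 ≤ z i) ∧ ∀ G, F ⊆ G → ∑ i ∈ G, z i = 1} := by
  refine convexHull_min ?_ ?_
  · rintro _ ⟨i, hi, rfl⟩
    refine ⟨fun j => ?_, fun G hFG => ?_⟩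
    · by_cases hj : j = i <;> simp [hj]
    · simp [Pi.single_apply, hFG hi]
  · rintro y ⟨hy0, hy1⟩ z ⟨hz0, hz1⟩ a b ha hb hab
    refine ⟨fun i => ?_, fun G hFG => ?_⟩
    · simp only [Pi.add_apply, Pi.smul_apply, smul_eq_mul]
      exact add_nonneg (mul_nonneg ha (hy0 i)) (mul_nonneg hb (hz0 i))
    · simp only [Pi.add_apply, Pi.smul_apply, smul_eq_mul, Finset.sum_add_distrib,
        ← Finset.mul_sum, hy1 G hFG, hz1 G hFG, mul_one, hab]

lemma convex_minkSum (𝓕 : Finset (Finset (Fin r))) : Convex ℝ (minkSum 𝓕) :=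
  Finset.sum_induction _ (Convex ℝ) (fun _ _ => Convex.add) (convex_singleton 0)
    fun _ _ => convex_convexHull ℝ _

lemma isCompact_minkSum (𝓕 : Finset (Finset (Fin r))) : IsCompact (minkSum 𝓕) :=
  Finset.sum_induction _ IsCompact (fun _ _ => IsCompact.add) isCompact_singleton
    fun F _ => (F.finite_toSet.image _).isCompact_convexHull ℝ

lemma minkSum_subset (𝓕 : Finset (Finset (Fin r))) :
    minkSum 𝓕 ⊆ {x | (∀ i, 0 ≤ x i) ∧ (∑ i, x i) = (𝓕.card : ℝ) ∧
      ∀ G : Finset (Fin r), ((𝓕.filter fun F => F ⊆ G).card : ℝ) ≤ ∑ i ∈ G, x i} := by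
  intro x hx
  obtain ⟨y, hy, rfl⟩ := (Set.mem_finsetSum _ _ _).1 hx
  have hy0 F (hF : F ∈ 𝓕) := (faceSimplex_subset F (hy hF)).1
  have hy1 F (hF : F ∈ 𝓕) := (faceSimplex_subset F (hy hF)).2
  have hsum (G : Finset (Fin r)) : ∑ i ∈ G, (∑ F ∈ 𝓕, y F) i = ∑ F ∈ 𝓕, ∑ i ∈ G, y F i := by
    simp only [Finset.sum_apply]
    exact Finset.sum_comm
  refine ⟨fun i => ?_, ?_, fun G => ?_⟩
  · rw [Finset.sum_apply]
    exact Finset.sum_nonneg fun F hF => hy0 F hF i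
  · rw [hsum, Finset.sum_congr rfl fun F hF => hy1 F hF _ (Finset.subset_univ F)]
    simp
  · calc ((𝓕.filter fun F => F ⊆ G).card : ℝ)
        = ∑ F ∈ 𝓕.filter fun F => F ⊆ G, ∑ i ∈ G, y F i := by
          rw [Finset.sum_congr rfl fun F hF => hy1 F (Finset.mem_filter.1 hF).1 G
            (Finset.mem_filter.1 hF).2]
          simp
      _ ≤ ∑ F ∈ 𝓕, ∑ i ∈ G, y F i :=
          Finset.sum_le_sum_of_subset_of_nonneg (Finset.filter_subset _ _)
            fun F hF _ => Finset.sum_nonneg fun i _ => hy0 F hF i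
      _ = ∑ i ∈ G, (∑ F ∈ 𝓕, y F) i := (hsum G).symm

end MinkowskiSumOfSimplices

section SupportFunction

variable {r : ℕ} {𝓕 : Finset (Finset (Fin r))} {x : Fin r → ℝ}

lemma nonempty_of_card_filter_subset_le
    (hG : ∀ G : Finset (Fin r), ((𝓕.filter fun F => F ⊆ G).card : ℝ) ≤ ∑ i ∈ G, x i)
    {F : Finset (Fin r)} (hF : F ∈ 𝓕) : F.Nonempty := by
  by_contra hne
  obtain rfl := Finset.not_nonempty_iff_eq_empty.1 hne
  have h0 := hG ∅
  rw [Finset.sum_empty, Nat.cast_nonpos, Finset.card_eq_zero, Finset.filter_eq_empty_iff] at h0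
  exact h0 hF subset_rfl

lemma sum_le_card_filter_not_disjoint (hsum : ∑ i, x i = (𝓕.card : ℝ))
    (hG : ∀ G : Finset (Fin r), ((𝓕.filter fun F => F ⊆ G).card : ℝ) ≤ ∑ i ∈ G, x i)
    (s : Finset (Fin r)) :
    ∑ i ∈ s, x i ≤ ((𝓕.filter fun F => ¬Disjoint F s).card : ℝ) := by
  have hcard : ((𝓕.filter fun F => Disjoint F s).card : ℝ) +
      (𝓕.filter fun F => ¬Disjoint F s).card = 𝓕.card := by
    exact_mod_cast Finset.card_filter_add_card_filter_not _
  have hcompl := hG sᶜ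
  simp only [Finset.subset_compl_iff_disjoint_right] at hcompl
  linarith [Finset.sum_compl_add_sum s x]

lemma sum_mul_le_sum_of_nonneg (hsum : ∑ i, x i = (𝓕.card : ℝ))
    (hG : ∀ G : Finset (Fin r), ((𝓕.filter fun F => F ⊆ G).card : ℝ) ≤ ∑ i ∈ G, x i)
    (s : Finset (Fin r)) (w : Fin r → ℝ) (hw0 : ∀ i, 0 ≤ w i) (hws : ∀ i ∉ s, w i = 0)
    (g : Finset (Fin r) → ℝ) (hg : ∀ F ∈ 𝓕, ∀ i ∈ F, w i ≤ g F) :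
    ∑ i, w i * x i ≤ ∑ F ∈ 𝓕, g F := by
  induction s using Finset.strongInduction generalizing w g with
  | H s ih =>
  rcases s.eq_empty_or_nonempty with rfl | hs
  · have hw : ∀ i, w i = 0 := fun i => hws i (Finset.notMem_empty i)
    simp only [hw, zero_mul, Finset.sum_const_zero]
    refine Finset.sum_nonneg fun F hF => ?_
    obtain ⟨i, hi⟩ := nonempty_of_card_filter_subset_le hG hF
    simpa [hw] using hg F hF i hi
  obtain ⟨i₀, hi₀, hm⟩ := Finset.exists_mem_eq_inf' hs w
  set m := s.inf' hs w
  have hmw : ∀ i ∈ s, m ≤ w i := fun i hi => Finset.inf'_le w hi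
  -- `w'` also vanishes at the minimiser `i₀`, so its support shrinks.
  set w' : Fin r → ℝ := fun i => w i - m * indVec s i
  set g' : Finset (Fin r) → ℝ := fun F => g F - m * if ¬Disjoint F s then 1 else 0
  have hw'0 : ∀ i, 0 ≤ w' i := by
    intro i
    by_cases hi : i ∈ s
    · simpa [w', indVec, hi] using hmw i hi
    · simpa [w', indVec, hi] using hw0 i
  have hw's : ∀ i ∉ s.erase i₀, w' i = 0 := by
    intro i hi
    by_cases hii₀ : i = i₀
    · simp [w', indVec, hii₀, hi₀, hm]
    · have his : i ∉ s := fun h => hi (Finset.mem_erase.2 ⟨hii₀, h⟩)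
      simp [w', indVec, his, hws i his]
  have hg' : ∀ F ∈ 𝓕, ∀ i ∈ F, w' i ≤ g' F := by
    intro F hF i hi
    by_cases hFs : Disjoint F s
    · simpa [w', g', indVec, hFs, Finset.disjoint_left.1 hFs hi] using hg F hF i hi
    obtain ⟨j, hjF, hjs⟩ := Finset.not_disjoint_iff.1 hFs
    have hmg : m ≤ g F := (hmw j hjs).trans (hg F hF j hjF)
    by_cases his : i ∈ s
    · simpa [w', g', indVec, hFs, his] using hg F hF i hi
    · simpa [w', g', indVec, hFs, his, hws i his] using hmg
  have hlayer : ∑ i, w i * x i = ∑ i, w' i * x i + m * ∑ i ∈ s, x i := by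
    simp [w', indVec, sub_mul, Finset.mul_sum, Finset.sum_ite_mem]
  have hg'sum :
      ∑ F ∈ 𝓕, g F = ∑ F ∈ 𝓕, g' F + m * (𝓕.filter fun F => ¬Disjoint F s).card := by
    simp only [g', Finset.sum_sub_distrib, ← Finset.mul_sum, Finset.sum_boole]
    ring
  calc ∑ i, w i * x i = ∑ i, w' i * x i + m * ∑ i ∈ s, x i := hlayer
    _ ≤ ∑ F ∈ 𝓕, g' F + m * (𝓕.filter fun F => ¬Disjoint F s).card :=
        add_le_add (ih _ (Finset.erase_ssubset hi₀) w' hw'0 hw's g' hg')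
          (mul_le_mul_of_nonneg_left (sum_le_card_filter_not_disjoint hsum hG s)
            (hm ▸ hw0 i₀))
    _ = ∑ F ∈ 𝓕, g F := hg'sum.symm

lemma sum_mul_le_sum (hsum : ∑ i, x i = (𝓕.card : ℝ))
    (hG : ∀ G : Finset (Fin r), ((𝓕.filter fun F => F ⊆ G).card : ℝ) ≤ ∑ i ∈ G, x i)
    (w : Fin r → ℝ) (g : Finset (Fin r) → ℝ) (hg : ∀ F ∈ 𝓕, ∀ i ∈ F, w i ≤ g F) :
    ∑ i, w i * x i ≤ ∑ F ∈ 𝓕, g F := by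
  obtain ⟨c, hc⟩ := (Set.finite_range w).bddBelow
  have hc' : ∀ i, c ≤ w i := fun i => hc ⟨i, rfl⟩
  have hshift := sum_mul_le_sum_of_nonneg hsum hG Finset.univ (fun i => w i - c)
    (fun i => sub_nonneg.2 (hc' i)) (fun i hi => absurd (Finset.mem_univ i) hi)
    (fun F => g F - c) fun F hF i hi => sub_le_sub_right (hg F hF i hi) c
  simp only [sub_mul, Finset.sum_sub_distrib, ← Finset.mul_sum, hsum] at hshift
  simpa [mul_comm] using hshift

lemma mem_minkSum_of_sum_eq_of_card_filter_subset_le (hsum : ∑ i, x i = (𝓕.card : ℝ))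
    (hG : ∀ G : Finset (Fin r), ((𝓕.filter fun F => F ⊆ G).card : ℝ) ≤ ∑ i ∈ G, x i) :
    x ∈ minkSum 𝓕 := by
  by_contra hx
  obtain ⟨f, u, hfu, hux⟩ :=
    geometric_hahn_banach_closed_point (convex_minkSum 𝓕) (isCompact_minkSum 𝓕).isClosed hx
  have hvertex : ∀ F ∈ 𝓕, ∃ v ∈ faceSimplex F, ∀ i ∈ F, f (Pi.single i 1) ≤ f v := by
    intro F hF
    obtain ⟨j, hj, hjmax⟩ :=
      F.exists_max_image (fun i => f (Pi.single i 1)) (nonempty_of_card_filter_subset_le hG hF)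
    exact ⟨_, single_mem_faceSimplex hj, hjmax⟩
  choose! v hvF hvmax using hvertex
  have hfx : f x = ∑ i, f (Pi.single i 1) * x i := by
    calc f x = f (∑ i, x i • Pi.single i 1) := by
          simp [← Pi.single_smul', Finset.univ_sum_single]
      _ = ∑ i, f (Pi.single i 1) * x i := by simp [map_sum, mul_comm]
  have hp : ∑ F ∈ 𝓕, v F ∈ minkSum 𝓕 := Set.finsetSum_mem_finsetSum _ _ _ hvF
  have hbound := sum_mul_le_sum hsum hG _ (fun F => f (v F)) hvmax
  rw [← hfx, ← map_sum] at hbound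
  linarith [hfu _ hp]

end SupportFunction

theorem statement9_general {r : ℕ} (𝓕 : Finset (Finset (Fin r))) :
    minkSum 𝓕 = {x : Fin r → ℝ | (∀ i, 0 ≤ x i) ∧ (∑ i, x i) = (𝓕.card : ℝ) ∧
      ∀ G : Finset (Fin r),
        ((𝓕.filter fun F => F ⊆ G).card : ℝ) ≤ ∑ i ∈ G, x i} :=
  (minkSum_subset 𝓕).antisymm fun _ ⟨_, hsum, hG⟩ =>
    mem_minkSum_of_sum_eq_of_card_filter_subset_le hsum hG

/-- Inequality description of the Minkowski sum `Δ_𝓕`: it consists of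
the nonnegative vectors with coordinate sum `|𝓕|` such that for every `G ⊆ [r]`,
`∑_{i ∈ G} x_i ≥ #{F ∈ 𝓕 : F ⊆ G}`. -/
theorem statement9 {r : ℕ} (𝓕 : Finset (Finset (Fin r))) (h𝓕 : 𝓕.Nonempty)
    (h : ∀ F ∈ 𝓕, F ≠ ∅) :
    minkSum 𝓕 = {x : Fin r → ℝ | (∀ i, 0 ≤ x i) ∧ (∑ i, x i) = (𝓕.card : ℝ) ∧
      ∀ G : Finset (Fin r),
        ((𝓕.filter fun F => F ⊆ G).card : ℝ) ≤ ∑ i ∈ G, x i} :=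
  statement9_general 𝓕
end
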